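/- arXiv:1303.4795 — 8 statements merged into one kernel-verified Lean document; each statement's English description precedes it below -/
import Mathlib

section
/- Let μ₀ = N(0, C) be a nondegenerate centered Gaussian measure on ℝⁿ with covariance matrix C = diag(λ₁,…,λₙ) where λ₁ ≥ λ₂ ≥ … ≥ λₙ > 0, and set a₁ = 1/λ₁. Then for every δ > 0 and every z ∈ ℝⁿ, the ratio μ₀(B(z,δ))/μ₀(B(0,δ)) is at most exp((a₁/2)δ²) · exp(−(a₁/2)(|z| − δ)²). -/
open MeasureTheory Metric Real
open scoped BigOperators


lemma oneD_real (b : ℝ) (hb : 0 ≤ b) (r c : ℝ) (hr : 0 ≤ r) (hc : 0 ≤ c) :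
    ∫ t in (c - r)..(c + r), exp (-(1/2) * (b * t^2)) ≤
      ∫ t in (-r)..r, exp (-(1/2) * (b * t^2)) := by
  have hcont : ∀ u v : ℝ, IntervalIntegrable (fun t => exp (-(1/2) * (b * t^2))) volume u v :=
    fun u v => (Continuous.intervalIntegrable (by continuity) u v)
  have h1 : ∫ t in (c - r)..(c + r), exp (-(1/2) * (b * t^2))
      = (∫ t in (c - r)..r, exp (-(1/2) * (b * t^2))) +
        ∫ t in r..(c + r), exp (-(1/2) * (b * t^2)) :=
    (intervalIntegral.integral_add_adjacent_intervals (hcont _ _) (hcont _ _)).symm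
  have h2 : ∫ t in (-r)..r, exp (-(1/2) * (b * t^2))
      = (∫ t in (-r)..(c - r), exp (-(1/2) * (b * t^2))) +
        ∫ t in (c - r)..r, exp (-(1/2) * (b * t^2)) :=
    (intervalIntegral.integral_add_adjacent_intervals (hcont _ _) (hcont _ _)).symm
  rw [h1, h2]
  have key : ∫ t in r..(c + r), exp (-(1/2) * (b * t^2)) ≤
      ∫ t in (-r)..(c - r), exp (-(1/2) * (b * t^2)) := by
    have hcomp : ∫ t in (-r)..(c - r), exp (-(1/2) * (b * (t + 2*r)^2))
        = ∫ t in r..(c + r), exp (-(1/2) * (b * t^2)) := by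
      rw [intervalIntegral.integral_comp_add_right (fun t => exp (-(1/2) * (b * t^2))) (2*r)]
      norm_num
      congr 1 <;> ring
    rw [← hcomp]
    apply intervalIntegral.integral_mono_on (by linarith)
      ((Continuous.intervalIntegrable (by continuity) _ _)) (hcont _ _)
    intro u hu
    apply exp_le_exp.2
    have h1 : u^2 ≤ (u + 2*r)^2 := by nlinarith [hu.1]
    nlinarith
  linarith

lemma oneD_real2 (b : ℝ) (hb : 0 ≤ b) (r : ℝ) (hr : 0 ≤ r) (c : ℝ) :
    ∫ t in (c - r)..(c + r), exp (-(1/2) * (b * t^2)) ≤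
      ∫ t in (-r)..r, exp (-(1/2) * (b * t^2)) := by
  rcases le_or_gt 0 c with hc | hc
  · exact oneD_real b hb r c hr hc
  · have := intervalIntegral.integral_comp_neg (a := -(c+r)) (b := -(c-r))
      (fun t => exp (-(1/2) * (b * t^2)))
    simp only [neg_neg] at this
    have heq : ∫ t in (c - r)..(c + r), exp (-(1/2) * (b * t^2))
        = ∫ t in (-c - r)..(-c + r), exp (-(1/2) * (b * t^2)) := by
      rw [← this]
      have e1 : -(c + r) = -c - r := by ring
      have e2 : -(c - r) = -c + r := by ring
      rw [e1, e2]
      congr 1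
      ext t
      congr 1
      ring
    rw [heq]
    exact oneD_real b hb r (-c) hr (by linarith)

lemma set_eq_Ioo (c ρ : ℝ) (hρ : 0 < ρ) :
    {t : ℝ | (t - c)^2 < ρ} = Set.Ioo (c - Real.sqrt ρ) (c + Real.sqrt ρ) := by
  ext t
  simp only [Set.mem_setOf_eq, Set.mem_Ioo]
  rw [← Real.sqrt_lt_sqrt_iff (sq_nonneg _), Real.sqrt_sq_eq_abs, abs_lt]
  constructor
  · rintro ⟨h1, h2⟩; constructor <;> linarith
  · rintro ⟨h1, h2⟩; constructor <;> linarith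

lemma oneD (b : ℝ) (hb : 0 ≤ b) (ρ c : ℝ) :
    ∫⁻ t : ℝ, (if (t - c)^2 < ρ then (1:ENNReal) else 0) *
        ENNReal.ofReal (exp (-(1/2) * (b * t^2)))
    ≤ ∫⁻ t : ℝ, (if t^2 < ρ then (1:ENNReal) else 0) *
        ENNReal.ofReal (exp (-(1/2) * (b * t^2))) := by
  rcases le_or_gt ρ 0 with hρ | hρ
  · have h0 : ∀ (d t : ℝ), ((if (t - d)^2 < ρ then (1:ENNReal) else 0) *
        ENNReal.ofReal (exp (-(1/2) * (b * t^2)))) = 0 := by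
      intro d t
      rw [if_neg (by nlinarith [sq_nonneg (t - d)]), zero_mul]
    refine le_of_eq (lintegral_congr fun t => ?_)
    rw [if_neg (by nlinarith [sq_nonneg (t - c)]), if_neg (by nlinarith [sq_nonneg t])]
  · set r := Real.sqrt ρ with hr
    have hrpos : 0 < r := Real.sqrt_pos.2 hρ
    have conv : ∀ d : ℝ, ∫⁻ t : ℝ, (if (t - d)^2 < ρ then (1:ENNReal) else 0) *
        ENNReal.ofReal (exp (-(1/2) * (b * t^2)))
        = ENNReal.ofReal (∫ t in (d - r)..(d + r), exp (-(1/2) * (b * t^2))) := by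
      intro d
      have hset := set_eq_Ioo d ρ hρ
      have : ∀ t : ℝ, (if (t - d)^2 < ρ then (1:ENNReal) else 0) *
          ENNReal.ofReal (exp (-(1/2) * (b * t^2)))
          = Set.indicator (Set.Ioo (d - r) (d + r))
              (fun t => ENNReal.ofReal (exp (-(1/2) * (b * t^2)))) t := by
        intro t
        rw [Set.indicator_apply]
        have hmem : t ∈ Set.Ioo (d - r) (d + r) ↔ (t - d)^2 < ρ := by
          rw [hr, ← hset]; rfl
        by_cases h : (t - d)^2 < ρ
        · rw [if_pos h, if_pos (hmem.2 h), one_mul]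
        · rw [if_neg h, if_neg (fun hx => h (hmem.1 hx)), zero_mul]
      rw [lintegral_congr this, lintegral_indicator measurableSet_Ioo]
      rw [← ofReal_integral_eq_lintegral_ofReal]
      · rw [intervalIntegral.integral_of_le (by linarith), integral_Ioc_eq_integral_Ioo]
      · exact ((Continuous.integrableOn_Icc (by continuity)).mono_set Set.Ioo_subset_Icc_self)
      · exact Filter.Eventually.of_forall fun t => (exp_pos _).le
    have conv0 : ∫⁻ t : ℝ, (if t^2 < ρ then (1:ENNReal) else 0) *
        ENNReal.ofReal (exp (-(1/2) * (b * t^2)))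
        = ENNReal.ofReal (∫ t in (-r)..r, exp (-(1/2) * (b * t^2))) := by
      have := conv 0
      simp only [sub_zero, zero_sub, zero_add] at this
      exact this
    rw [conv c, conv0]
    exact ENNReal.ofReal_le_ofReal (oneD_real2 b hb r hrpos.le c)


lemma hmeas_aux (k : ℕ) (ρ' : ℝ) (b' c' : Fin k → ℝ) :
    Measurable (fun x : Fin k → ℝ =>
      (if ∑ j, (x j - c' j)^2 < ρ' then (1:ENNReal) else 0) *
        ∏ j, ENNReal.ofReal (exp (-(1/2) * (b' j * (x j)^2)))) := by
  apply Measurable.mul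
  · apply Measurable.ite _ measurable_const measurable_const
    apply measurableSet_lt _ measurable_const
    apply Finset.measurable_sum
    intro j _
    exact ((measurable_pi_apply j).sub measurable_const).pow measurable_const
  · apply Finset.measurable_prod
    intro j _
    apply Measurable.ennreal_ofReal
    apply Measurable.exp
    exact (measurable_const.mul (((measurable_pi_apply j)).pow measurable_const)).const_mul _

lemma anderson : ∀ (n : ℕ) (b : Fin n → ℝ), (∀ j, 0 ≤ b j) → ∀ (ρ : ℝ) (c : Fin n → ℝ),
    (∫⁻ x : Fin n → ℝ, (if ∑ j, (x j - c j)^2 < ρ then (1:ENNReal) else 0) *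
        ∏ j, ENNReal.ofReal (exp (-(1/2) * (b j * (x j)^2))))
    ≤ ∫⁻ x : Fin n → ℝ, (if ∑ j, (x j)^2 < ρ then (1:ENNReal) else 0) *
        ∏ j, ENNReal.ofReal (exp (-(1/2) * (b j * (x j)^2)))
  | 0, b, hb, ρ, c => by simp
  | (m+1), b, hb, ρ, c => by
    have hmp := (measurePreserving_piFinSuccAbove (fun _ : Fin (m+1) => (volume : Measure ℝ)) 0).symm
    set e := (MeasurableEquiv.piFinSuccAbove (fun _ : Fin (m+1) => ℝ) 0) with he
    -- transfer to iterated integral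
    have transfer : ∀ d : Fin (m+1) → ℝ,
        (∫⁻ x : Fin (m+1) → ℝ, (if ∑ j, (x j - d j)^2 < ρ then (1:ENNReal) else 0) *
          ∏ j, ENNReal.ofReal (exp (-(1/2) * (b j * (x j)^2))))
        = ∫⁻ t : ℝ, ∫⁻ y : Fin m → ℝ,
            (if (t - d 0)^2 + ∑ i, (y i - d i.succ)^2 < ρ then (1:ENNReal) else 0) *
            (ENNReal.ofReal (exp (-(1/2) * (b 0 * t^2))) *
              ∏ i, ENNReal.ofReal (exp (-(1/2) * (b i.succ * (y i)^2)))) := by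
      intro d
      set F : (Fin (m+1) → ℝ) → ENNReal := fun x =>
        (if ∑ j, (x j - d j)^2 < ρ then (1:ENNReal) else 0) *
          ∏ j, ENNReal.ofReal (exp (-(1/2) * (b j * (x j)^2))) with hF
      have hFm : Measurable F := hmeas_aux (m+1) ρ b d
      calc ∫⁻ x : Fin (m+1) → ℝ, F x
          = ∫⁻ x : Fin (m+1) → ℝ, F x ∂(Measure.pi fun _ => volume) := by rw [volume_pi]
        _ = ∫⁻ p : ℝ × (Fin m → ℝ), F (e.symm p)
              ∂((volume : Measure ℝ).prod (Measure.pi fun _ => volume)) :=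
            (hmp.lintegral_comp_emb (MeasurableEquiv.measurableEmbedding _) F).symm
        _ = ∫⁻ t : ℝ, ∫⁻ y : Fin m → ℝ, F (e.symm (t, y))
              ∂(Measure.pi fun _ => volume) :=
            lintegral_prod _ ((hFm.comp e.symm.measurable).aemeasurable)
        _ = ∫⁻ t : ℝ, ∫⁻ y : Fin m → ℝ, F (Fin.cons t y) := by
            rw [volume_pi]
            refine lintegral_congr fun t => lintegral_congr fun y => ?_
            congr 1
            simp [he, MeasurableEquiv.piFinSuccAbove_symm_apply, Fin.insertNthEquiv,
              Fin.insertNth_zero']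
        _ = _ := by
            refine lintegral_congr fun t => lintegral_congr fun y => ?_
            rw [hF]
            simp only [Fin.sum_univ_succ, Fin.prod_univ_succ, Fin.cons_zero, Fin.cons_succ]
    have huncm : ∀ (q : ℝ → ℝ), Measurable q → ∀ (ds : Fin m → ℝ), Measurable (Function.uncurry
        fun (t : ℝ) (y : Fin m → ℝ) =>
          (if q t + ∑ i, (y i - ds i)^2 < ρ then (1:ENNReal) else 0) *
            (ENNReal.ofReal (exp (-(1/2) * (b 0 * t^2))) *
              ∏ i, ENNReal.ofReal (exp (-(1/2) * (b i.succ * (y i)^2))))) := by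
      intro q hq ds
      apply Measurable.mul
      · refine Measurable.ite (measurableSet_lt ?_ measurable_const)
          measurable_const measurable_const
        apply Measurable.add
        · exact hq.comp measurable_fst
        · exact Finset.measurable_sum _ fun i _ =>
            (((measurable_pi_apply i).comp measurable_snd).sub measurable_const).pow
              measurable_const
      · apply Measurable.mul
        · exact ((((measurable_fst.pow measurable_const).const_mul _).const_mul _)).exp.ennreal_ofReal
        · exact Finset.measurable_prod _ fun i _ =>
            (((((measurable_pi_apply i).comp measurable_snd).pow
              measurable_const).const_mul _).const_mul _).exp.ennreal_ofReal
    have hPne : ∀ y : Fin m → ℝ,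
        (∏ i, ENNReal.ofReal (exp (-(1/2) * (b i.succ * (y i)^2)))) ≠ ⊤ := by
      intro y
      exact (ENNReal.prod_lt_top fun i _ => ENNReal.ofReal_lt_top).ne
    have hz0 : (∫⁻ x : Fin (m+1) → ℝ,
        (if ∑ j, (x j)^2 < ρ then (1:ENNReal) else 0) *
          ∏ j, ENNReal.ofReal (exp (-(1/2) * (b j * (x j)^2))))
        = ∫⁻ x : Fin (m+1) → ℝ,
        (if ∑ j, (x j - (0 : Fin (m+1) → ℝ) j)^2 < ρ then (1:ENNReal) else 0) *
          ∏ j, ENNReal.ofReal (exp (-(1/2) * (b j * (x j)^2))) := by simp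
    rw [transfer c, hz0, transfer 0]
    simp only [Pi.zero_apply, sub_zero]
    calc ∫⁻ t : ℝ, ∫⁻ y : Fin m → ℝ,
          (if (t - c 0)^2 + ∑ i, (y i - c i.succ)^2 < ρ then (1:ENNReal) else 0) *
            (ENNReal.ofReal (exp (-(1/2) * (b 0 * t^2))) *
              ∏ i, ENNReal.ofReal (exp (-(1/2) * (b i.succ * (y i)^2))))
        = ∫⁻ y : Fin m → ℝ, ∫⁻ t : ℝ,
          (if (t - c 0)^2 + ∑ i, (y i - c i.succ)^2 < ρ then (1:ENNReal) else 0) *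
            (ENNReal.ofReal (exp (-(1/2) * (b 0 * t^2))) *
              ∏ i, ENNReal.ofReal (exp (-(1/2) * (b i.succ * (y i)^2)))) :=
          lintegral_lintegral_swap (huncm (fun t => (t - c 0)^2)
            ((measurable_id.sub measurable_const).pow measurable_const) _).aemeasurable
      _ ≤ ∫⁻ y : Fin m → ℝ, ∫⁻ t : ℝ,
          (if t^2 + ∑ i, (y i - c i.succ)^2 < ρ then (1:ENNReal) else 0) *
            (ENNReal.ofReal (exp (-(1/2) * (b 0 * t^2))) *
              ∏ i, ENNReal.ofReal (exp (-(1/2) * (b i.succ * (y i)^2)))) := by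
          refine lintegral_mono fun y => ?_
          have hsh : ∀ (q : ℝ → ℝ),
              (fun t : ℝ => (if q t + ∑ i, (y i - c i.succ)^2 < ρ then (1:ENNReal) else 0) *
                (ENNReal.ofReal (exp (-(1/2) * (b 0 * t^2))) *
                  ∏ i, ENNReal.ofReal (exp (-(1/2) * (b i.succ * (y i)^2)))))
              = fun t : ℝ =>
                ((if q t < ρ - ∑ i, (y i - c i.succ)^2 then (1:ENNReal) else 0) *
                  ENNReal.ofReal (exp (-(1/2) * (b 0 * t^2)))) *
                  ∏ i, ENNReal.ofReal (exp (-(1/2) * (b i.succ * (y i)^2))) := by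
            intro q
            funext t
            simp only [show (q t + ∑ i, (y i - c i.succ)^2 < ρ)
                = (q t < ρ - ∑ i, (y i - c i.succ)^2) from
              propext lt_sub_iff_add_lt.symm, mul_assoc]
          rw [lintegral_congr (congrFun (hsh (fun t => (t - c 0)^2))),
            lintegral_congr (congrFun (hsh (fun t => t^2))),
            lintegral_mul_const' _ _ (hPne y), lintegral_mul_const' _ _ (hPne y)]
          exact mul_le_mul_left (oneD (b 0) (hb 0) _ (c 0)) _
      _ = ∫⁻ t : ℝ, ∫⁻ y : Fin m → ℝ,
          (if t^2 + ∑ i, (y i - c i.succ)^2 < ρ then (1:ENNReal) else 0) *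
            (ENNReal.ofReal (exp (-(1/2) * (b 0 * t^2))) *
              ∏ i, ENNReal.ofReal (exp (-(1/2) * (b i.succ * (y i)^2)))) :=
          (lintegral_lintegral_swap (huncm (fun t => t^2)
            (measurable_id.pow measurable_const) _).aemeasurable).symm
      _ ≤ ∫⁻ t : ℝ, ∫⁻ y : Fin m → ℝ,
          (if t^2 + ∑ i, (y i)^2 < ρ then (1:ENNReal) else 0) *
            (ENNReal.ofReal (exp (-(1/2) * (b 0 * t^2))) *
              ∏ i, ENNReal.ofReal (exp (-(1/2) * (b i.succ * (y i)^2)))) := by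
          refine lintegral_mono fun t => ?_
          have hsh2 : ∀ (ds : Fin m → ℝ),
              (fun y : Fin m → ℝ =>
                (if t^2 + ∑ i, (y i - ds i)^2 < ρ then (1:ENNReal) else 0) *
                (ENNReal.ofReal (exp (-(1/2) * (b 0 * t^2))) *
                  ∏ i, ENNReal.ofReal (exp (-(1/2) * (b i.succ * (y i)^2)))))
              = fun y : Fin m → ℝ =>
                ENNReal.ofReal (exp (-(1/2) * (b 0 * t^2))) *
                ((if ∑ i, (y i - ds i)^2 < ρ - t^2 then (1:ENNReal) else 0) *
                  ∏ i, ENNReal.ofReal (exp (-(1/2) * (b i.succ * (y i)^2)))) := by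
            intro ds
            funext y
            simp only [show (t^2 + ∑ i, (y i - ds i)^2 < ρ)
                = (∑ i, (y i - ds i)^2 < ρ - t^2) from
              propext lt_sub_iff_add_lt'.symm, mul_left_comm]
          have hz : (fun y : Fin m → ℝ =>
                (if t^2 + ∑ i, (y i)^2 < ρ then (1:ENNReal) else 0) *
                (ENNReal.ofReal (exp (-(1/2) * (b 0 * t^2))) *
                  ∏ i, ENNReal.ofReal (exp (-(1/2) * (b i.succ * (y i)^2)))))
              = fun y : Fin m → ℝ =>
                ENNReal.ofReal (exp (-(1/2) * (b 0 * t^2))) *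
                ((if ∑ i, (y i)^2 < ρ - t^2 then (1:ENNReal) else 0) *
                  ∏ i, ENNReal.ofReal (exp (-(1/2) * (b i.succ * (y i)^2)))) := by
            have := hsh2 0
            simpa using this
          rw [lintegral_congr (congrFun (hsh2 (fun i => c i.succ))),
            lintegral_congr (congrFun hz),
            lintegral_const_mul' _ _ ENNReal.ofReal_ne_top,
            lintegral_const_mul' _ _ ENNReal.ofReal_ne_top]
          exact mul_le_mul_right
            (anderson m (fun i => b i.succ) (fun i => hb i.succ) (ρ - t^2) (fun i => c i.succ)) _


lemma ball_transfer (n : ℕ) (b : Fin n → ℝ) (δ : ℝ) (hδ : 0 < δ)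
    (c : EuclideanSpace ℝ (Fin n)) :
    ∫⁻ x in ball c δ, ENNReal.ofReal (exp (-(1/2) * ∑ j, b j * (x j)^2))
    = ∫⁻ x : Fin n → ℝ, (if ∑ j, (x j - c j)^2 < δ^2 then (1:ENNReal) else 0) *
        ∏ j, ENNReal.ofReal (exp (-(1/2) * (b j * (x j)^2))) := by
  have hball : ball c δ = {x : EuclideanSpace ℝ (Fin n) | ∑ j, (x j - c j)^2 < δ^2} := by
    ext x
    rw [mem_ball, EuclideanSpace.dist_eq, Set.mem_setOf_eq, Real.sqrt_lt' hδ]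
    simp [Real.dist_eq, sq_abs]
  have hopen : MeasurableSet {x : EuclideanSpace ℝ (Fin n) | ∑ j, (x j - c j)^2 < δ^2} := by
    apply measurableSet_lt _ measurable_const
    exact Finset.measurable_sum _ fun j _ =>
      (((measurable_pi_apply j).comp (MeasurableEquiv.toLp 2 (Fin n → ℝ)).symm.measurable).sub measurable_const).pow measurable_const
  rw [hball, ← lintegral_indicator hopen]
  have hmp := (EuclideanSpace.volume_preserving_symm_measurableEquiv_toLp (Fin n)).symm
  rw [← hmp.lintegral_comp_emb (MeasurableEquiv.measurableEmbedding _)]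
  refine lintegral_congr fun x => ?_
  simp only [Function.comp_apply, Set.indicator_apply, Set.mem_setOf_eq]
  have hco : ∀ j, ((MeasurableEquiv.toLp 2 (Fin n → ℝ)).symm.symm x) j = x j := fun j => rfl
  simp only [hco]
  have hexp : ENNReal.ofReal (exp (-(1/2) * ∑ j, b j * (x j)^2))
      = ∏ j, ENNReal.ofReal (exp (-(1/2) * (b j * (x j)^2))) := by
    rw [← ENNReal.ofReal_prod_of_nonneg (fun i _ => (exp_pos _).le), ← Real.exp_sum,
      ← Finset.mul_sum]
  by_cases h : ∑ j, (x j - c j)^2 < δ^2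
  · rw [if_pos h, if_pos h, one_mul, hexp]
  · rw [if_neg h, if_neg h, zero_mul]

lemma exp_cont (n : ℕ) (b : Fin n → ℝ) :
    Continuous (fun x : EuclideanSpace ℝ (Fin n) => exp (-(1/2) * ∑ j, b j * (x j)^2)) := by
  apply Real.continuous_exp.comp
  apply Continuous.mul continuous_const
  apply continuous_finset_sum
  intro j _
  exact Continuous.mul continuous_const
    (((continuous_apply j).comp (PiLp.continuous_ofLp 2 (fun _ : Fin n => ℝ))).pow 2)

lemma exp_integrableOn (n : ℕ) (b : Fin n → ℝ) (δ : ℝ) (c : EuclideanSpace ℝ (Fin n)) :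
    IntegrableOn (fun x : EuclideanSpace ℝ (Fin n) => exp (-(1/2) * ∑ j, b j * (x j)^2))
      (ball c δ) := by
  apply (((exp_cont n b).continuousOn).integrableOn_compact (isCompact_closedBall c δ)).mono_set
    ball_subset_closedBall

lemma setint_eq_lint (n : ℕ) (b : Fin n → ℝ) (δ : ℝ) (c : EuclideanSpace ℝ (Fin n)) :
    ∫ x in ball c δ, exp (-(1/2) * ∑ j, b j * (x j)^2)
    = (∫⁻ x in ball c δ, ENNReal.ofReal (exp (-(1/2) * ∑ j, b j * (x j)^2))).toReal := by
  rw [integral_eq_lintegral_of_nonneg_ae (Filter.Eventually.of_forall fun x => (exp_pos _).le)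
    ((exp_cont n b).aestronglyMeasurable.restrict)]

lemma lint_ball_ne_top (n : ℕ) (b : Fin n → ℝ) (hb : ∀ j, 0 ≤ b j) (δ : ℝ)
    (c : EuclideanSpace ℝ (Fin n)) :
    (∫⁻ x in ball c δ, ENNReal.ofReal (exp (-(1/2) * ∑ j, b j * (x j)^2))) ≠ ⊤ := by
  have hle : ∀ x : EuclideanSpace ℝ (Fin n),
      ENNReal.ofReal (exp (-(1/2) * ∑ j, b j * (x j)^2)) ≤ 1 := by
    intro x
    rw [show (1 : ENNReal) = ENNReal.ofReal 1 by simp]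
    apply ENNReal.ofReal_le_ofReal
    apply Real.exp_le_one_iff.2
    have : 0 ≤ ∑ j, b j * (x j)^2 :=
      Finset.sum_nonneg fun j _ => mul_nonneg (hb j) (sq_nonneg _)
    nlinarith
  refine ne_top_of_le_ne_top ?_ (lintegral_mono hle)
  rw [lintegral_one, Measure.restrict_apply MeasurableSet.univ, Set.univ_inter]
  exact measure_ball_lt_top.ne

lemma anderson_ball (n : ℕ) (b : Fin n → ℝ) (hb : ∀ j, 0 ≤ b j) (δ : ℝ) (hδ : 0 < δ)
    (z : EuclideanSpace ℝ (Fin n)) :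
    ∫ x in ball z δ, exp (-(1/2) * ∑ j, b j * (x j)^2)
    ≤ ∫ x in ball (0 : EuclideanSpace ℝ (Fin n)) δ, exp (-(1/2) * ∑ j, b j * (x j)^2) := by
  rw [setint_eq_lint, setint_eq_lint]
  apply ENNReal.toReal_mono (lint_ball_ne_top n b hb δ 0)
  rw [ball_transfer n b δ hδ z, ball_transfer n b δ hδ 0]
  have h0 : ∀ j : Fin n, ((0 : EuclideanSpace ℝ (Fin n)) j) = 0 := fun j => rfl
  simp only [h0, sub_zero]
  exact anderson n b hb (δ^2) (fun j => z j)


/-- Small-ball ratio bound for a nondegenerate diagonal centered Gaussian on ℝⁿ: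
the Gaussian mass ratio of balls (expressed via the Gaussian density, the
normalising constant cancelling) satisfies
μ₀(B(z,δ))/μ₀(B(0,δ)) ≤ exp((a₁/2)δ²)·exp(−(a₁/2)(‖z‖−δ)²) with a₁ = 1/λ₁. -/
theorem stmt0 (n : ℕ) (hn : 0 < n) (lam : Fin n → ℝ) (hpos : ∀ j, 0 < lam j)
    (hmono : Antitone lam) (a : Fin n → ℝ) (ha : ∀ j, a j = (lam j)⁻¹)
    (δ : ℝ) (hδ : 0 < δ) (z : EuclideanSpace ℝ (Fin n)) :
    (∫ x in ball z δ, exp (-(1/2) * ∑ j, a j * (x j)^2)) /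
      (∫ x in ball (0 : EuclideanSpace ℝ (Fin n)) δ, exp (-(1/2) * ∑ j, a j * (x j)^2))
    ≤ exp ((a ⟨0, hn⟩ / 2) * δ^2) * exp (-(a ⟨0, hn⟩ / 2) * (‖z‖ - δ)^2) := by
  set a1 := a ⟨0, hn⟩ with ha1def
  have ha1pos : 0 < a1 := by rw [ha1def, ha ⟨0,hn⟩]; exact inv_pos.2 (hpos _)
  have haj : ∀ j, 0 ≤ a j := fun j => by rw [ha j]; exact (inv_pos.2 (hpos j)).le
  have ha1le : ∀ j, a1 ≤ a j := by
    intro j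
    rw [ha1def, ha, ha]
    refine inv_anti₀ (hpos j) (hmono ?_)
    exact Fin.mk_le_of_le_val (Nat.zero_le _)
  have hnorm : ∀ x : EuclideanSpace ℝ (Fin n), ‖x‖^2 = ∑ j, (x j)^2 := by
    intro x
    rw [EuclideanSpace.norm_eq, Real.sq_sqrt (Finset.sum_nonneg fun j _ => sq_nonneg _)]
    simp [Real.norm_eq_abs, sq_abs]
  set D := ∫ x in ball (0 : EuclideanSpace ℝ (Fin n)) δ, exp (-(1/2) * ∑ j, a j * (x j)^2)
    with hDdef
  set N := ∫ x in ball z δ, exp (-(1/2) * ∑ j, a j * (x j)^2) with hNdef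
  have hDpos : 0 < D := by
    rw [hDdef]
    rw [setIntegral_pos_iff_support_of_nonneg_ae
      (Filter.Eventually.of_forall fun x => (exp_pos _).le) (exp_integrableOn n a δ 0)]
    have hsupp : Function.support
        (fun x : EuclideanSpace ℝ (Fin n) => exp (-(1/2) * ∑ j, a j * (x j)^2)) = Set.univ := by
      ext x; simp [Function.mem_support, (exp_pos _).ne']
    rw [hsupp, Set.univ_inter]
    exact measure_ball_pos _ _ hδ
  rw [div_le_iff₀ hDpos]
  rcases le_or_gt ‖z‖ δ with hzδ | hzδ
  · have hN : N ≤ D := anderson_ball n a haj δ hδ z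
    have hK1 : (1:ℝ) ≤ exp ((a1/2) * δ^2) * exp (-(a1/2) * (‖z‖-δ)^2) := by
      rw [← Real.exp_add]
      apply Real.one_le_exp
      nlinarith [mul_nonneg ha1pos.le (mul_nonneg (norm_nonneg z)
        (by linarith : (0:ℝ) ≤ 2*δ - ‖z‖))]
    calc N ≤ D := hN
      _ ≤ (exp (a1/2 * δ^2) * exp (-(a1/2) * (‖z‖-δ)^2)) * D :=
        le_mul_of_one_le_left hDpos.le hK1
  · -- δ < ‖z‖
    have hsplit : ∀ x : EuclideanSpace ℝ (Fin n),
        -(1/2) * ∑ j, a j * (x j)^2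
          = -(a1/2) * ∑ j, (x j)^2 + -(1/2) * ∑ j, (a j - a1) * (x j)^2 := by
      intro x
      rw [Finset.mul_sum, Finset.mul_sum, Finset.mul_sum, ← Finset.sum_add_distrib]
      exact Finset.sum_congr rfl fun j _ => by ring
    have step1 : N ≤ ∫ x in ball z δ,
        exp (-(a1/2) * (‖z‖-δ)^2) * exp (-(1/2) * ∑ j, (a j - a1) * (x j)^2) := by
      apply setIntegral_mono_on (exp_integrableOn n a δ z)
        ((exp_integrableOn n (fun j => a j - a1) δ z).const_mul _) measurableSet_ball
      intro x hx
      rw [show exp (-(1/2) * ∑ j, a j * (x j)^2)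
          = exp (-(a1/2) * ∑ j, (x j)^2) * exp (-(1/2) * ∑ j, (a j - a1) * (x j)^2) by
        rw [← Real.exp_add, ← hsplit x]]
      apply mul_le_mul_of_nonneg_right _ (exp_pos _).le
      apply exp_le_exp.2
      have h1 : ‖z‖ - ‖x‖ ≤ δ := by
        have := norm_sub_norm_le z x
        have hd : ‖z - x‖ < δ := by
          rw [← dist_eq_norm, dist_comm]
          exact mem_ball.1 hx
        linarith
      have h2 : (‖z‖ - δ)^2 ≤ ∑ j, (x j)^2 := by
        rw [← hnorm x]
        nlinarith [norm_nonneg x]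
      nlinarith
    have step2 : (∫ x in ball z δ, exp (-(1/2) * ∑ j, (a j - a1) * (x j)^2))
        ≤ ∫ x in ball (0 : EuclideanSpace ℝ (Fin n)) δ,
            exp (-(1/2) * ∑ j, (a j - a1) * (x j)^2) :=
      anderson_ball n (fun j => a j - a1) (fun j => sub_nonneg.2 (ha1le j)) δ hδ z
    have step3 : (∫ x in ball (0 : EuclideanSpace ℝ (Fin n)) δ,
        exp (-(1/2) * ∑ j, (a j - a1) * (x j)^2))
        ≤ ∫ x in ball (0 : EuclideanSpace ℝ (Fin n)) δ,
            exp ((a1/2) * δ^2) * exp (-(1/2) * ∑ j, a j * (x j)^2) := by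
      apply setIntegral_mono_on (exp_integrableOn n (fun j => a j - a1) δ 0)
        ((exp_integrableOn n a δ 0).const_mul _) measurableSet_ball
      intro x hx
      rw [← Real.exp_add]
      apply exp_le_exp.2
      have hT : ∑ j, (x j)^2 ≤ δ^2 := by
        rw [← hnorm x]
        have := mem_ball_zero_iff.1 hx
        nlinarith [norm_nonneg x]
      have := hsplit x
      nlinarith
    rw [integral_const_mul] at step1 step3
    calc N ≤ exp (-(a1/2) * (‖z‖-δ)^2) *
          ∫ x in ball z δ, exp (-(1/2) * ∑ j, (a j - a1) * (x j)^2) := step1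
      _ ≤ exp (-(a1/2) * (‖z‖-δ)^2) *
          ∫ x in ball (0 : EuclideanSpace ℝ (Fin n)) δ,
            exp (-(1/2) * ∑ j, (a j - a1) * (x j)^2) :=
          mul_le_mul_of_nonneg_left step2 (exp_pos _).le
      _ ≤ exp (-(a1/2) * (‖z‖-δ)^2) * (exp ((a1/2) * δ^2) * D) :=
          mul_le_mul_of_nonneg_left step3 (exp_pos _).le
      _ = (exp (a1/2 * δ^2) * exp (-(a1/2) * (‖z‖-δ)^2)) * D := by ring
end

section
/- Let μ₀ be a Borel probability measure on a separable Banach space X, and let Φ : X → ℝ be locally Lipschitz: for every r > 0 there is L(r) > 0 such that |Φ(u) − Φ(v)| ≤ L(r)‖u − v‖ for all ‖u‖, ‖v‖ < r. Define Jδ(z) = ∫_{B(z,δ)} exp(−Φ(u)) dμ₀(u). Then for any z₁, z₂ ∈ X with μ₀(B(z₂,δ)) > 0 for all δ > 0, and any δ > 0, we have Jδ(z₁)/Jδ(z₂) ≤ exp(δ(L₁+L₂)) · exp(Φ(z₂) − Φ(z₁)) · μ₀(B(z₁,δ))/μ₀(B(z₂,δ)), where L₁ = L(‖z₁‖+δ)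 and L₂ = L(‖z₂‖+δ). -/
open MeasureTheory Metric Real

lemma cont_of_locLip {X : Type*} [NormedAddCommGroup X]
    (Φ : X → ℝ) (L : ℝ → ℝ)
    (hLip : ∀ r > 0, ∀ u v : X, ‖u‖ < r → ‖v‖ < r → |Φ u - Φ v| ≤ L r * ‖u - v‖) :
    Continuous Φ := by
  rw [continuous_iff_continuousAt]
  intro x
  set r : ℝ := ‖x‖ + 1 with hr
  have hr0 : 0 < r := by positivity
  have hlip : LipschitzOnWith (Real.toNNReal (L r)) Φ (ball (0 : X) r) := by
    apply LipschitzOnWith.of_dist_le_mul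
    intro u hu v hv
    have := hLip r hr0 u v (by simpa [mem_ball, dist_zero_right] using hu) (by simpa [mem_ball, dist_zero_right] using hv)
    calc dist (Φ u) (Φ v) = |Φ u - Φ v| := Real.dist_eq _ _
      _ ≤ L r * ‖u - v‖ := this
      _ ≤ Real.toNNReal (L r) * dist u v := by
          rw [dist_eq_norm]
          exact mul_le_mul_of_nonneg_right (Real.le_coe_toNNReal _) (norm_nonneg _)
  exact (hlip.continuousOn).continuousAt (isOpen_ball.mem_nhds (by rw [mem_ball, dist_zero_right]; linarith))

/-- Key bound of Theorem 3.2: for a probability measure μ₀ on a separable Banach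
space and a locally Lipschitz potential Φ, with Jδ(z) = ∫_{B(z,δ)} exp(−Φ) dμ₀,
Jδ(z₁)/Jδ(z₂) ≤ exp(δ(L₁+L₂)) exp(Φ(z₂)−Φ(z₁)) μ₀(B(z₁,δ))/μ₀(B(z₂,δ)),
where Lᵢ = L(‖zᵢ‖+δ). -/
theorem stmt3 {X : Type*} [NormedAddCommGroup X] [NormedSpace ℝ X]
    [TopologicalSpace.SeparableSpace X] [MeasurableSpace X] [BorelSpace X]
    (μ₀ : Measure X) [IsProbabilityMeasure μ₀]
    (Φ : X → ℝ) (L : ℝ → ℝ)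
    (hLpos : ∀ r > 0, 0 < L r)
    (hLip : ∀ r > 0, ∀ u v : X, ‖u‖ < r → ‖v‖ < r → |Φ u - Φ v| ≤ L r * ‖u - v‖)
    (z₁ z₂ : X) (δ : ℝ) (hδ : 0 < δ)
    (hpos : ∀ d > 0, 0 < μ₀ (ball z₂ d)) :
    (∫ u in ball z₁ δ, exp (-Φ u) ∂μ₀) / (∫ u in ball z₂ δ, exp (-Φ u) ∂μ₀)
      ≤ exp (δ * (L (‖z₁‖ + δ) + L (‖z₂‖ + δ))) * exp (Φ z₂ - Φ z₁) *
        ((μ₀ (ball z₁ δ)).toReal / (μ₀ (ball z₂ δ)).toReal) := by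
  have hcont : Continuous Φ := cont_of_locLip Φ L hLip
  set L₁ := L (‖z₁‖ + δ)
  set L₂ := L (‖z₂‖ + δ)
  have hr₁ : (0:ℝ) < ‖z₁‖ + δ := by positivity
  have hr₂ : (0:ℝ) < ‖z₂‖ + δ := by positivity
  set m₁ := (μ₀ (ball z₁ δ)).toReal with hm₁
  set m₂ := (μ₀ (ball z₂ δ)).toReal with hm₂
  have hμfin : ∀ z : X, μ₀ (ball z δ) ≠ ⊤ := fun z => measure_ne_top μ₀ _
  have hm₂pos : 0 < m₂ := ENNReal.toReal_pos (hpos δ hδ).ne' (hμfin z₂)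
  have hm₁nonneg : 0 ≤ m₁ := ENNReal.toReal_nonneg
  -- integrability on balls
  have hint : ∀ z : X, IntegrableOn (fun u => exp (-Φ u)) (ball z δ) μ₀ := by
    intro z
    set C : ℝ := ‖z‖ + δ with hCdef
    have hC : ∀ u ∈ ball z δ, ‖u‖ ≤ C := by
      intro u hu
      have h1 : ‖u - z‖ < δ := by simpa [dist_eq_norm] using hu
      have h2 : ‖u‖ ≤ ‖z‖ + ‖u - z‖ := norm_le_insert' u z
      linarith
    have hbd : ∀ u ∈ ball z δ, |Φ u| ≤ |Φ 0| + L (C+1) * (C+1) := by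
      intro u hu
      have hu' : ‖u‖ < C + 1 := lt_of_le_of_lt (hC u hu) (by linarith)
      have hC0 : (0:ℝ) ≤ C := by positivity
      have hCpos : (0:ℝ) < C + 1 := by linarith
      have h0 : ‖(0:X)‖ < C + 1 := by simpa using hCpos
      have := hLip (C+1) hCpos u 0 hu' h0
      have h2 : |Φ u| - |Φ 0| ≤ |Φ u - Φ 0| := abs_sub_abs_le_abs_sub _ _
      have h3 : L (C+1) * ‖u - 0‖ ≤ L (C+1) * (C+1) := by
        have := (hLpos (C+1) hCpos).le
        gcongr
        simpa using hu'.le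
      linarith
    refine Measure.integrableOn_of_bounded (M := exp (|Φ 0| + L (C+1) * (C+1))) (hμfin z)
      ((hcont.neg.rexp).aestronglyMeasurable) ?_
    filter_upwards [ae_restrict_mem measurableSet_ball] with u hu
    rw [Real.norm_eq_abs, abs_of_pos (exp_pos _)]
    calc exp (-Φ u) ≤ exp (|Φ 0| + L (C+1) * (C+1)) := by
          apply exp_le_exp.2
          have := hbd u hu
          have := neg_abs_le (Φ u)
          linarith
      _ = exp (|Φ 0| + L (C+1) * (C+1)) := rfl
  -- pointwise bounds
  have hub : ∀ u ∈ ball z₁ δ, exp (-Φ u) ≤ exp (δ * L₁ - Φ z₁) := by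
    intro u hu
    have hu1 : ‖u‖ < ‖z₁‖ + δ := by
      calc ‖u‖ ≤ ‖z₁‖ + ‖u - z₁‖ := by
            have := norm_sub_norm_le u z₁; linarith [norm_sub_rev u z₁ ▸ this,
              norm_le_insert' u z₁]
        _ < ‖z₁‖ + δ := by
            have : ‖u - z₁‖ < δ := by simpa [dist_eq_norm] using hu
            linarith
    have hz1 : ‖z₁‖ < ‖z₁‖ + δ := by linarith
    have h := hLip _ hr₁ u z₁ hu1 hz1
    have hdist : ‖u - z₁‖ ≤ δ := by
      have : ‖u - z₁‖ < δ := by simpa [dist_eq_norm] using hu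
      linarith
    have h2 : Φ z₁ - Φ u ≤ L₁ * δ := by
      have habs : Φ z₁ - Φ u ≤ |Φ u - Φ z₁| := by
        rw [abs_sub_comm]; exact le_abs_self _
      have h3 : L₁ * ‖u - z₁‖ ≤ L₁ * δ := by
        have := (hLpos _ hr₁).le; gcongr
      linarith
    apply exp_le_exp.2; linarith [mul_comm L₁ δ]
  have hlb : ∀ u ∈ ball z₂ δ, exp (-δ * L₂ - Φ z₂) ≤ exp (-Φ u) := by
    intro u hu
    have hu1 : ‖u‖ < ‖z₂‖ + δ := by
      calc ‖u‖ ≤ ‖z₂‖ + ‖u - z₂‖ := norm_le_insert' u z₂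
        _ < ‖z₂‖ + δ := by
            have : ‖u - z₂‖ < δ := by simpa [dist_eq_norm] using hu
            linarith
    have hz2 : ‖z₂‖ < ‖z₂‖ + δ := by linarith
    have h := hLip _ hr₂ u z₂ hu1 hz2
    have hdist : ‖u - z₂‖ ≤ δ := by
      have : ‖u - z₂‖ < δ := by simpa [dist_eq_norm] using hu
      linarith
    have h2 : Φ u - Φ z₂ ≤ L₂ * δ := by
      have habs : Φ u - Φ z₂ ≤ |Φ u - Φ z₂| := le_abs_self _
      have h3 : L₂ * ‖u - z₂‖ ≤ L₂ * δ := by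
        have := (hLpos _ hr₂).le; gcongr
      linarith
    apply exp_le_exp.2; linarith [mul_comm L₂ δ]
  -- integral bounds
  have hI₁ : (∫ u in ball z₁ δ, exp (-Φ u) ∂μ₀) ≤ exp (δ * L₁ - Φ z₁) * m₁ := by
    have := setIntegral_mono_on (hint z₁)
      (integrableOn_const (hμfin z₁))
      measurableSet_ball hub
    simpa [setIntegral_const, smul_eq_mul, mul_comm, measureReal_def, hm₁] using this
  have hI₂ : exp (-δ * L₂ - Φ z₂) * m₂ ≤ (∫ u in ball z₂ δ, exp (-Φ u) ∂μ₀) := by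
    have := setIntegral_mono_on
      (integrableOn_const (hμfin z₂))
      (hint z₂) measurableSet_ball hlb
    simpa [setIntegral_const, smul_eq_mul, mul_comm, measureReal_def, hm₂] using this
  have hI₁nonneg : 0 ≤ (∫ u in ball z₁ δ, exp (-Φ u) ∂μ₀) :=
    setIntegral_nonneg measurableSet_ball (fun u _ => (exp_pos _).le)
  have hd : 0 < exp (-δ * L₂ - Φ z₂) * m₂ := mul_pos (exp_pos _) hm₂pos
  have key : (∫ u in ball z₁ δ, exp (-Φ u) ∂μ₀) / (∫ u in ball z₂ δ, exp (-Φ u) ∂μ₀)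
      ≤ (exp (δ * L₁ - Φ z₁) * m₁) / (exp (-δ * L₂ - Φ z₂) * m₂) :=
    div_le_div₀ (by positivity) hI₁ hd hI₂
  calc (∫ u in ball z₁ δ, exp (-Φ u) ∂μ₀) / (∫ u in ball z₂ δ, exp (-Φ u) ∂μ₀)
      ≤ (exp (δ * L₁ - Φ z₁) * m₁) / (exp (-δ * L₂ - Φ z₂) * m₂) := key
    _ = (exp (δ * L₁ - Φ z₁) / exp (-δ * L₂ - Φ z₂)) * (m₁ / m₂) :=
        (div_mul_div_comm _ _ _ _).symm
    _ = exp (δ * (L₁ + L₂)) * exp (Φ z₂ - Φ z₁) * (m₁ / m₂) := by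
        rw [← Real.exp_sub, ← Real.exp_add]
        ring_nf
end

section
/- Let μ₀ be a Borel probability measure on a separable Banach space X such that for z₁, z₂ ∈ X the limit lim_{δ→0} μ₀(B(z₁,δ))/μ₀(B(z₂,δ)) = exp(½‖z₂‖_E² − ½‖z₁‖_E²) holds, where ‖·‖_E is a given (extended-real-valued) functional finite at z₁, z₂. Let Φ : X → ℝ be locally Lipschitz. Define μ by dμ/dμ₀ ∝ exp(−Φ) and I(z) = Φ(z) + ½‖z‖_E². Then lim_{δ→0} μ(B(z₁,δ))/μ(B(z₂,δ)) = exp(I(z₂) − I(z₁)). -/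
open MeasureTheory Metric Real Filter
open scoped Topology ENNReal

lemma om_aux {X : Type*} [NormedAddCommGroup X] [MeasurableSpace X] [BorelSpace X]
    (μ₀ : Measure X) (Φ : X → ℝ) (Z : ℝ) (hZ : 0 < Z)
    (z : X) (δ C : ℝ)
    (hC : ∀ u ∈ ball z δ, |Φ u - Φ z| ≤ C) :
    ENNReal.ofReal (exp (-Φ z - C) / Z) * μ₀ (ball z δ) ≤
      (μ₀.withDensity (fun u => ENNReal.ofReal (exp (-Φ u) / Z))) (ball z δ) ∧
    (μ₀.withDensity (fun u => ENNReal.ofReal (exp (-Φ u) / Z))) (ball z δ) ≤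
      ENNReal.ofReal (exp (-Φ z + C) / Z) * μ₀ (ball z δ) := by
  rw [withDensity_apply _ measurableSet_ball]
  constructor
  · rw [← setLIntegral_const]
    refine setLIntegral_mono' measurableSet_ball fun u hu => ?_
    refine ENNReal.ofReal_le_ofReal ?_
    have h := abs_le.mp (hC u hu)
    have h1 : -Φ z - C ≤ -Φ u := by linarith [h.2]
    gcongr
  · calc ∫⁻ u in ball z δ, ENNReal.ofReal (exp (-Φ u) / Z) ∂μ₀
        ≤ ∫⁻ _ in ball z δ, ENNReal.ofReal (exp (-Φ z + C) / Z) ∂μ₀ := by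
          refine setLIntegral_mono measurable_const fun u hu => ?_
          refine ENNReal.ofReal_le_ofReal ?_
          have h := abs_le.mp (hC u hu)
          have h1 : -Φ u ≤ -Φ z + C := by linarith [h.1]
          gcongr
      _ = _ := setLIntegral_const _ _

/-- Theorem 3.2 (Onsager–Machlup functional), abstract form: assume the Gaussian
small-ball ratio limit for μ₀ at z₁, z₂ (with extended-real "Cameron–Martin norm"
functional nE, finite at z₁, z₂), Φ locally Lipschitz, and μ defined by
dμ/dμ₀ = exp(−Φ)/Z. Then μ(B(z₁,δ))/μ(B(z₂,δ)) → exp(I(z₂) − I(z₁)) as δ → 0⁺,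
where I(z) = Φ(z) + ½‖z‖_E². -/
theorem stmt4 {X : Type*} [NormedAddCommGroup X] [NormedSpace ℝ X]
    [TopologicalSpace.SeparableSpace X] [MeasurableSpace X] [BorelSpace X]
    (μ₀ : Measure X) [IsProbabilityMeasure μ₀]
    (nE : X → ℝ≥0∞) (Φ : X → ℝ) (L : ℝ → ℝ)
    (hLip : ∀ r > 0, ∀ u v : X, ‖u‖ < r → ‖v‖ < r → |Φ u - Φ v| ≤ L r * ‖u - v‖)
    (z₁ z₂ : X) (h₁ : nE z₁ ≠ ∞) (h₂ : nE z₂ ≠ ∞)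
    (Z : ℝ) (hZdef : Z = ∫ u, exp (-Φ u) ∂μ₀) (hZpos : 0 < Z)
    (μ : Measure X)
    (hμ : μ = μ₀.withDensity (fun u => ENNReal.ofReal (exp (-Φ u) / Z)))
    (hsmall : Tendsto
      (fun δ : ℝ => (μ₀ (ball z₁ δ)).toReal / (μ₀ (ball z₂ δ)).toReal)
      (𝓝[>] 0)
      (𝓝 (exp ((nE z₂).toReal ^ 2 / 2 - (nE z₁).toReal ^ 2 / 2)))) :
    Tendsto (fun δ : ℝ => (μ (ball z₁ δ)).toReal / (μ (ball z₂ δ)).toReal)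
      (𝓝[>] 0)
      (𝓝 (exp ((Φ z₂ + (nE z₂).toReal ^ 2 / 2) - (Φ z₁ + (nE z₁).toReal ^ 2 / 2)))) := by
  set a₁ := (nE z₁).toReal ^ 2 / 2 with ha₁
  set a₂ := (nE z₂).toReal ^ 2 / 2 with ha₂
  set c : ℝ := max |L (‖z₁‖ + 1)| |L (‖z₂‖ + 1)| with hc
  have hc0 : 0 ≤ c := le_trans (abs_nonneg _) (le_max_left _ _)
  set D : ℝ := Φ z₂ - Φ z₁ with hD
  have hZne : Z ≠ 0 := ne_of_gt hZpos
  -- Lipschitz bound on small balls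
  have hball : ∀ z : X, |L (‖z‖ + 1)| ≤ c → ∀ δ : ℝ, 0 < δ → δ ≤ 1 →
      ∀ u ∈ ball z δ, |Φ u - Φ z| ≤ c * δ := by
    intro z hz δ hδ hδ1 u hu
    have hr : (0:ℝ) < ‖z‖ + 1 := by positivity
    have hu' : ‖u - z‖ < δ := by rwa [mem_ball, dist_eq_norm] at hu
    have heq : z + (u - z) = u := by abel
    have h1 : ‖u‖ < ‖z‖ + 1 := by
      calc ‖u‖ = ‖z + (u - z)‖ := by rw [heq]
        _ ≤ ‖z‖ + ‖u - z‖ := norm_add_le _ _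
        _ < ‖z‖ + 1 := by linarith
    have h2 : ‖z‖ < ‖z‖ + 1 := by linarith
    calc |Φ u - Φ z| ≤ L (‖z‖ + 1) * ‖u - z‖ := hLip _ hr u z h1 h2
      _ ≤ |L (‖z‖ + 1)| * ‖u - z‖ :=
          mul_le_mul_of_nonneg_right (le_abs_self _) (norm_nonneg _)
      _ ≤ c * δ := mul_le_mul hz hu'.le (norm_nonneg _) hc0
  -- limits of the bounding functions
  have hexp : ∀ s : ℝ, Tendsto (fun δ : ℝ => exp (D + s * δ)) (𝓝[>] 0) (𝓝 (exp D)) := by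
    intro s
    have : Tendsto (fun δ : ℝ => exp (D + s * δ)) (𝓝 0) (𝓝 (exp (D + s * 0))) :=
      (Real.continuous_exp.comp (continuous_const.add
        (continuous_const.mul continuous_id))).tendsto 0
    simpa using this.mono_left nhdsWithin_le_nhds
  have hlim : exp D * exp (a₂ - a₁) = exp ((Φ z₂ + a₂) - (Φ z₁ + a₁)) := by
    rw [← exp_add, hD]; ring_nf
  have hlow : Tendsto (fun δ : ℝ => exp (D + (-(2*c)) * δ) *
      ((μ₀ (ball z₁ δ)).toReal / (μ₀ (ball z₂ δ)).toReal)) (𝓝[>] 0)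
      (𝓝 (exp ((Φ z₂ + a₂) - (Φ z₁ + a₁)))) := by
    rw [← hlim]; exact (hexp _).mul hsmall
  have hhigh : Tendsto (fun δ : ℝ => exp (D + (2*c) * δ) *
      ((μ₀ (ball z₁ δ)).toReal / (μ₀ (ball z₂ δ)).toReal)) (𝓝[>] 0)
      (𝓝 (exp ((Φ z₂ + a₂) - (Φ z₁ + a₁)))) := by
    rw [← hlim]; exact (hexp _).mul hsmall
  -- eventual two-sided bound
  have hev : ∀ᶠ δ : ℝ in 𝓝[>] 0,
      exp (D + (-(2*c)) * δ) * ((μ₀ (ball z₁ δ)).toReal / (μ₀ (ball z₂ δ)).toReal) ≤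
        (μ (ball z₁ δ)).toReal / (μ (ball z₂ δ)).toReal ∧
      (μ (ball z₁ δ)).toReal / (μ (ball z₂ δ)).toReal ≤
        exp (D + (2*c) * δ) * ((μ₀ (ball z₁ δ)).toReal / (μ₀ (ball z₂ δ)).toReal) := by
    have hev1 : ∀ᶠ δ : ℝ in 𝓝[>] 0, 0 < δ := self_mem_nhdsWithin
    have hev2 : ∀ᶠ δ : ℝ in 𝓝[>] 0, δ < 1 :=
      (eventually_lt_nhds zero_lt_one).filter_mono nhdsWithin_le_nhds
    have hev3 : ∀ᶠ δ : ℝ in 𝓝[>] 0,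
        0 < (μ₀ (ball z₁ δ)).toReal / (μ₀ (ball z₂ δ)).toReal :=
      hsmall.eventually (eventually_gt_nhds (exp_pos _))
    filter_upwards [hev1, hev2, hev3] with δ hδ hδ1 hrpos
    set a : ℝ := (μ₀ (ball z₁ δ)).toReal with haa
    set b : ℝ := (μ₀ (ball z₂ δ)).toReal with hbb
    have hbpos : 0 < b := by
      by_contra hb
      push_neg at hb
      have hb0 : b = 0 := le_antisymm hb ENNReal.toReal_nonneg
      rw [hb0, div_zero] at hrpos
      exact lt_irrefl 0 hrpos
    have hapos : 0 < a := by
      have := mul_pos hrpos hbpos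
      rwa [div_mul_cancel₀ _ (ne_of_gt hbpos)] at this
    have hb₁ := om_aux μ₀ Φ Z hZpos z₁ δ (c * δ)
      (hball z₁ (le_max_left _ _) δ hδ hδ1.le)
    have hb₂ := om_aux μ₀ Φ Z hZpos z₂ δ (c * δ)
      (hball z₂ (le_max_right _ _) δ hδ hδ1.le)
    rw [← hμ] at hb₁ hb₂
    have key : ∀ (z : X) (K : ℝ),
        μ (ball z δ) ≤ ENNReal.ofReal (exp K / Z) * μ₀ (ball z δ) →
        (μ (ball z δ)).toReal ≤ exp K / Z * (μ₀ (ball z δ)).toReal := by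
      intro z K h
      have hne : ENNReal.ofReal (exp K / Z) * μ₀ (ball z δ) ≠ ∞ :=
        ENNReal.mul_ne_top ENNReal.ofReal_ne_top (measure_ne_top _ _)
      have := ENNReal.toReal_mono hne h
      rwa [ENNReal.toReal_mul, ENNReal.toReal_ofReal (by positivity)] at this
    have key' : ∀ (z : X) (K K' : ℝ),
        ENNReal.ofReal (exp K / Z) * μ₀ (ball z δ) ≤ μ (ball z δ) →
        μ (ball z δ) ≤ ENNReal.ofReal (exp K' / Z) * μ₀ (ball z δ) →
        exp K / Z * (μ₀ (ball z δ)).toReal ≤ (μ (ball z δ)).toReal := by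
      intro z K K' h h'
      have hfinμ : μ (ball z δ) ≠ ∞ := ne_top_of_le_ne_top
        (ENNReal.mul_ne_top ENNReal.ofReal_ne_top (measure_ne_top _ _)) h'
      have := ENNReal.toReal_mono hfinμ h
      rwa [ENNReal.toReal_mul, ENNReal.toReal_ofReal (by positivity)] at this
    have hA_up : (μ (ball z₁ δ)).toReal ≤ exp (-Φ z₁ + c * δ) / Z * a := key z₁ _ hb₁.2
    have hA_lo : exp (-Φ z₁ - c * δ) / Z * a ≤ (μ (ball z₁ δ)).toReal :=
      key' z₁ _ _ hb₁.1 hb₁.2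
    have hB_up : (μ (ball z₂ δ)).toReal ≤ exp (-Φ z₂ + c * δ) / Z * b := key z₂ _ hb₂.2
    have hB_lo : exp (-Φ z₂ - c * δ) / Z * b ≤ (μ (ball z₂ δ)).toReal :=
      key' z₂ _ _ hb₂.1 hb₂.2
    set A : ℝ := (μ (ball z₁ δ)).toReal with hAA
    set B : ℝ := (μ (ball z₂ δ)).toReal with hBB
    have hBpos : 0 < B :=
      lt_of_lt_of_le (mul_pos (by positivity) hbpos) hB_lo
    have hE : ∀ x y : ℝ, (exp x / Z * a) / (exp y / Z * b) = exp (x - y) * (a / b) := by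
      intro x y
      rw [exp_sub]
      field_simp
    constructor
    · have h1 : (exp (-Φ z₁ - c * δ) / Z * a) / (exp (-Φ z₂ + c * δ) / Z * b) ≤ A / B :=
        div_le_div₀ ENNReal.toReal_nonneg hA_lo hBpos hB_up
      have h2 : (-Φ z₁ - c * δ) - (-Φ z₂ + c * δ) = D + (-(2*c)) * δ := by
        rw [hD]; ring
      rwa [hE, h2] at h1
    · have h1 : A / B ≤ (exp (-Φ z₁ + c * δ) / Z * a) / (exp (-Φ z₂ - c * δ) / Z * b) :=
        div_le_div₀ (by positivity) hA_up (mul_pos (by positivity) hbpos) hB_lo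
      have h2 : (-Φ z₁ + c * δ) - (-Φ z₂ - c * δ) = D + (2*c) * δ := by
        rw [hD]; ring
      rwa [hE, h2] at h1
  exact tendsto_of_tendsto_of_tendsto_of_le_of_le' hlow hhigh
    (hev.mono fun δ h => h.1) (hev.mono fun δ h => h.2)
end

section
/- Under the hypotheses of the previous abstract setting (μ₀ a probability measure on X with the Gaussian small-ball ratio property at z, Φ locally Lipschitz, μ defined by dμ/dμ₀ ∝ exp(−Φ), Z = ∫_X exp(−Φ)dμ₀), for any z with ‖z‖_E < ∞ we have lim_{δ→0} μ(B(z,δ))/μ₀(B(0,δ)) = Z⁻¹ exp(−I(z)) where I(z) = Φ(z) + ½‖z‖_E², assuming lim_{δ→0} μ₀(B(z,δ))/μ₀(B(0,δ)) = exp(−½‖z‖_E²). -/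
open MeasureTheory Metric Real Filter
open scoped Topology ENNReal

/-- Corollary 3.3, abstract form: with μ₀ a probability measure on a separable
Banach space having the Gaussian small-ball ratio property at z (with
extended-real Cameron–Martin norm nE, finite at z), Φ locally Lipschitz,
Z = ∫ exp(−Φ) dμ₀ and dμ/dμ₀ = exp(−Φ)/Z, we have
μ(B(z,δ))/μ₀(B(0,δ)) → Z⁻¹ exp(−I(z)) as δ → 0⁺, where I(z) = Φ(z) + ½‖z‖_E². -/
theorem stmt5 {X : Type*} [NormedAddCommGroup X] [NormedSpace ℝ X]
    [TopologicalSpace.SeparableSpace X] [MeasurableSpace X] [BorelSpace X]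
    (μ₀ : Measure X) [IsProbabilityMeasure μ₀]
    (nE : X → ℝ≥0∞) (Φ : X → ℝ) (L : ℝ → ℝ)
    (hLip : ∀ r > 0, ∀ u v : X, ‖u‖ < r → ‖v‖ < r → |Φ u - Φ v| ≤ L r * ‖u - v‖)
    (z : X) (hz : nE z ≠ ∞)
    (Z : ℝ) (hZdef : Z = ∫ u, exp (-Φ u) ∂μ₀) (hZpos : 0 < Z)
    (μ : Measure X)
    (hμ : μ = μ₀.withDensity (fun u => ENNReal.ofReal (exp (-Φ u) / Z)))
    (hsmall : Tendsto
      (fun δ : ℝ => (μ₀ (ball z δ)).toReal / (μ₀ (ball (0 : X) δ)).toReal)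
      (𝓝[>] 0) (𝓝 (exp (-((nE z).toReal ^ 2 / 2))))) :
    Tendsto (fun δ : ℝ => (μ (ball z δ)).toReal / (μ₀ (ball (0 : X) δ)).toReal)
      (𝓝[>] 0) (𝓝 (Z⁻¹ * exp (-(Φ z + (nE z).toReal ^ 2 / 2)))) := by
  have hZne : Z ≠ 0 := ne_of_gt hZpos
  set K := max (L (‖z‖ + 1)) 0 with hKdef
  have hK0 : 0 ≤ K := le_max_right _ _
  set C := (nE z).toReal ^ 2 / 2 with hC
  -- the key pointwise bound on small balls
  have hball : ∀ δ ∈ Set.Ioo (0:ℝ) 1, ∀ u ∈ ball z δ,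
      |Φ u - Φ z| ≤ K * δ := by
    intro δ hδ u hu
    have hzr : ‖z‖ < ‖z‖ + 1 := by linarith
    have huz : ‖u - z‖ < δ := by
      simpa [mem_ball, dist_eq_norm] using hu
    have hur : ‖u‖ < ‖z‖ + 1 := by
      calc ‖u‖ = ‖u - z + z‖ := by rw [sub_add_cancel]
        _ ≤ ‖u - z‖ + ‖z‖ := norm_add_le _ _
        _ < δ + ‖z‖ := by linarith
        _ ≤ ‖z‖ + 1 := by linarith [hδ.2]
    calc |Φ u - Φ z| ≤ L (‖z‖ + 1) * ‖u - z‖ :=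
          hLip (‖z‖ + 1) (by positivity) u z hur hzr
      _ ≤ K * ‖u - z‖ := mul_le_mul_of_nonneg_right (le_max_left _ _) (norm_nonneg _)
      _ ≤ K * δ := mul_le_mul_of_nonneg_left huz.le hK0
  -- measure bounds
  have key : ∀ δ ∈ Set.Ioo (0:ℝ) 1,
      exp (-Φ z - K * δ) / Z * (μ₀ (ball z δ)).toReal ≤ (μ (ball z δ)).toReal ∧
      (μ (ball z δ)).toReal ≤ exp (-Φ z + K * δ) / Z * (μ₀ (ball z δ)).toReal := by
    intro δ hδ
    have hμball : μ (ball z δ)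
        = ∫⁻ u in ball z δ, ENNReal.ofReal (exp (-Φ u) / Z) ∂μ₀ := by
      rw [hμ, withDensity_apply _ measurableSet_ball]
    have hup : μ (ball z δ)
        ≤ ENNReal.ofReal (exp (-Φ z + K * δ) / Z) * μ₀ (ball z δ) := by
      rw [hμball]
      calc ∫⁻ u in ball z δ, ENNReal.ofReal (exp (-Φ u) / Z) ∂μ₀
          ≤ ∫⁻ _ in ball z δ, ENNReal.ofReal (exp (-Φ z + K * δ) / Z) ∂μ₀ := by
            apply setLIntegral_mono' measurableSet_ball
            intro u hu
            apply ENNReal.ofReal_le_ofReal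
            apply div_le_div_of_nonneg_right ?_ hZpos.le
            apply Real.exp_le_exp.2
            have := hball δ hδ u hu
            have := abs_le.1 this
            linarith [this.1]
        _ = ENNReal.ofReal (exp (-Φ z + K * δ) / Z) * μ₀ (ball z δ) := by
            rw [setLIntegral_const]
    have hlo : ENNReal.ofReal (exp (-Φ z - K * δ) / Z) * μ₀ (ball z δ)
        ≤ μ (ball z δ) := by
      rw [hμball]
      calc ENNReal.ofReal (exp (-Φ z - K * δ) / Z) * μ₀ (ball z δ)
          = ∫⁻ _ in ball z δ, ENNReal.ofReal (exp (-Φ z - K * δ) / Z) ∂μ₀ := by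
            rw [setLIntegral_const]
        _ ≤ ∫⁻ u in ball z δ, ENNReal.ofReal (exp (-Φ u) / Z) ∂μ₀ := by
            apply setLIntegral_mono' measurableSet_ball
            intro u hu
            apply ENNReal.ofReal_le_ofReal
            apply div_le_div_of_nonneg_right ?_ hZpos.le
            apply Real.exp_le_exp.2
            have := abs_le.1 (hball δ hδ u hu)
            linarith [this.2]
    have hfin : ENNReal.ofReal (exp (-Φ z + K * δ) / Z) * μ₀ (ball z δ) ≠ ⊤ :=
      ENNReal.mul_ne_top ENNReal.ofReal_ne_top (measure_ne_top μ₀ _)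
    have hμfin : μ (ball z δ) ≠ ⊤ := ne_top_of_le_ne_top hfin hup
    constructor
    · have := ENNReal.toReal_mono hμfin hlo
      rwa [ENNReal.toReal_mul, ENNReal.toReal_ofReal (by positivity)] at this
    · have := ENNReal.toReal_mono hfin hup
      rwa [ENNReal.toReal_mul, ENNReal.toReal_ofReal (by positivity)] at this
  have hlimeq : Z⁻¹ * exp (-(Φ z + C)) = exp (-Φ z) / Z * exp (-C) := by
    rw [neg_add, Real.exp_add]; ring
  have hconst : ∀ s : ℝ, Tendsto (fun δ : ℝ => exp (-Φ z + s * (K * δ)) / Z)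
      (𝓝[>] 0) (𝓝 (exp (-Φ z) / Z)) := by
    intro s
    have hc : Continuous fun δ : ℝ => exp (-Φ z + s * (K * δ)) / Z := by
      continuity
    have h2 : Tendsto (fun δ : ℝ => exp (-Φ z + s * (K * δ)) / Z) (𝓝[>] 0)
        (𝓝 (exp (-Φ z + s * (K * 0)) / Z)) :=
      (hc.tendsto 0).mono_left nhdsWithin_le_nhds
    simpa using h2
  have hg : Tendsto (fun δ : ℝ => exp (-Φ z - K * δ) / Z *
      ((μ₀ (ball z δ)).toReal / (μ₀ (ball (0:X) δ)).toReal))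
      (𝓝[>] 0) (𝓝 (Z⁻¹ * exp (-(Φ z + C)))) := by
    rw [hlimeq]
    have := (hconst (-1)).mul hsmall
    simpa [sub_eq_add_neg, neg_mul] using this
  have hh : Tendsto (fun δ : ℝ => exp (-Φ z + K * δ) / Z *
      ((μ₀ (ball z δ)).toReal / (μ₀ (ball (0:X) δ)).toReal))
      (𝓝[>] 0) (𝓝 (Z⁻¹ * exp (-(Φ z + C)))) := by
    rw [hlimeq]
    have := (hconst 1).mul hsmall
    simpa using this
  refine tendsto_of_tendsto_of_tendsto_of_le_of_le' hg hh ?_ ?_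
  · filter_upwards [Ioo_mem_nhdsGT_of_mem (by norm_num : (0:ℝ) ∈ Set.Ico 0 1)] with δ hδ
    have h1 := (key δ hδ).1
    calc exp (-Φ z - K * δ) / Z * ((μ₀ (ball z δ)).toReal / (μ₀ (ball (0:X) δ)).toReal)
        = exp (-Φ z - K * δ) / Z * (μ₀ (ball z δ)).toReal * ((μ₀ (ball (0:X) δ)).toReal)⁻¹ := by
          ring
      _ ≤ (μ (ball z δ)).toReal * ((μ₀ (ball (0:X) δ)).toReal)⁻¹ :=
          mul_le_mul_of_nonneg_right h1 (inv_nonneg.2 ENNReal.toReal_nonneg)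
      _ = (μ (ball z δ)).toReal / (μ₀ (ball (0:X) δ)).toReal := (div_eq_mul_inv _ _).symm
  · filter_upwards [Ioo_mem_nhdsGT_of_mem (by norm_num : (0:ℝ) ∈ Set.Ico 0 1)] with δ hδ
    have h2 := (key δ hδ).2
    calc (μ (ball z δ)).toReal / (μ₀ (ball (0:X) δ)).toReal
        = (μ (ball z δ)).toReal * ((μ₀ (ball (0:X) δ)).toReal)⁻¹ := div_eq_mul_inv _ _
      _ ≤ exp (-Φ z + K * δ) / Z * (μ₀ (ball z δ)).toReal * ((μ₀ (ball (0:X) δ)).toReal)⁻¹ :=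
          mul_le_mul_of_nonneg_right h2 (inv_nonneg.2 ENNReal.toReal_nonneg)
      _ = exp (-Φ z + K * δ) / Z * ((μ₀ (ball z δ)).toReal / (μ₀ (ball (0:X) δ)).toReal) := by
          ring
end

section
/- Fix u† in a Hilbert space E, a map 𝒢 : X → ℝᴷ on a Banach space X ⊇ E, and i.i.d. centered ℝᴷ-valued random vectors η₁,…,ηₙ with E|C₁^{-1/2}η₁|² = K < ∞. For each n, let uₙ minimize Iₙ(u) = ‖u‖_E² + Σ_{j=1}^{n} |yⱼ − 𝒢(u)|²_{C₁} over E, where yⱼ = 𝒢(u†) + ηⱼ. Then E|𝒢(u†) − 𝒢(uₙ)|²_{C₁} ≤ (2/n)(‖u†‖_E² + 2K) and E‖uₙ‖_E² ≤ ‖u†‖_E² + 2K; in particular E|𝒢(u†) − 𝒢(uₙ)|²_{C₁} → 0 as n → ∞. -/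
open MeasureTheory Filter Metric ProbabilityTheory
open scoped Topology
open scoped RealInnerProductSpace

set_option maxHeartbeats 2000000 in
/-- Core estimates in Theorem 4.1 (large sample size limit): with u† ∈ E,
yⱼ = 𝒢(u†) + ηⱼ for i.i.d. centered noise with E|C₁^{-1/2}η|² = K (the weighted
norm |v|_{C₁} being realised as ‖S v‖ with S = C₁^{-1/2}), and uₙ minimising
Iₙ(u) = ‖u‖_E² + Σ_{j<n} |yⱼ − 𝒢(u)|²_{C₁} over E, one has
E|𝒢(u†) − 𝒢(uₙ)|²_{C₁} ≤ (2/n)(‖u†‖² + 2K), E‖uₙ‖² ≤ ‖u†‖² + 2K, and the first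
expectation tends to 0. -/
theorem stmt10 {E X : Type*} [NormedAddCommGroup E] [InnerProductSpace ℝ E]
    [CompleteSpace E] [TopologicalSpace.SeparableSpace E]
    [NormedAddCommGroup X] [NormedSpace ℝ X]
    (ι : E →L[ℝ] X) (hinj : Function.Injective ι)
    {K : ℕ} (G : X → EuclideanSpace ℝ (Fin K))
    (S : EuclideanSpace ℝ (Fin K) →L[ℝ] EuclideanSpace ℝ (Fin K))
    (hS : Function.Bijective S)
    {Ω : Type*} [MeasurableSpace Ω] (P : Measure Ω) [IsProbabilityMeasure P]
    (η : ℕ → Ω → EuclideanSpace ℝ (Fin K))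
    (hηmeas : ∀ j, Measurable (η j))
    (hindep : iIndepFun η P)
    (hident : ∀ j, P.map (η j) = P.map (η 0))
    (hcent : ∀ j, (∫ ω, η j ω ∂P) = 0)
    (Kc : ℝ)
    (hKint : ∀ j, Integrable (fun ω => ‖S (η j ω)‖^2) P)
    (hKc : ∀ j, (∫ ω, ‖S (η j ω)‖^2 ∂P) = Kc)
    (udag : E) (u : ℕ → Ω → E)
    (hmin : ∀ n ω, ∀ w : E,
      ‖u n ω‖^2 + ∑ j ∈ Finset.range n, ‖S (G (ι udag) + η j ω - G (ι (u n ω)))‖^2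
        ≤ ‖w‖^2 + ∑ j ∈ Finset.range n, ‖S (G (ι udag) + η j ω - G (ι w))‖^2)
    (hGint : ∀ n, Integrable (fun ω => ‖S (G (ι udag) - G (ι (u n ω)))‖^2) P)
    (huint : ∀ n, Integrable (fun ω => ‖u n ω‖^2) P) :
    (∀ n : ℕ, 1 ≤ n →
      (∫ ω, ‖S (G (ι udag) - G (ι (u n ω)))‖^2 ∂P) ≤ (2 / n) * (‖udag‖^2 + 2 * Kc) ∧
      (∫ ω, ‖u n ω‖^2 ∂P) ≤ ‖udag‖^2 + 2 * Kc) ∧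
    Tendsto (fun n => ∫ ω, ‖S (G (ι udag) - G (ι (u n ω)))‖^2 ∂P) atTop (𝓝 0) := by
  classical
  have hKc0 : 0 ≤ Kc := by
    rw [← hKc 0]; exact integral_nonneg fun ω => sq_nonneg _
  have hC0 : 0 ≤ ‖udag‖^2 + 2 * Kc := by positivity
  set b : ℕ → Ω → EuclideanSpace ℝ (Fin K) :=
    fun n ω => S (G (ι udag) - G (ι (u n ω))) with hbdef
  set A : ℕ → Ω → EuclideanSpace ℝ (Fin K) :=
    fun n ω => ∑ j ∈ Finset.range n, S (η j ω) with hAdef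
  -- coordinate bound
  have hcoord_le : ∀ (x : EuclideanSpace ℝ (Fin K)) (k : Fin K), |x k| ≤ ‖x‖ := by
    intro x k
    rw [EuclideanSpace.norm_eq]
    calc |x k| = Real.sqrt (‖x k‖^2) := by
          rw [Real.norm_eq_abs, Real.sqrt_sq (abs_nonneg _)]
      _ ≤ Real.sqrt (∑ i, ‖x i‖^2) := Real.sqrt_le_sqrt
          (Finset.single_le_sum (f := fun i => ‖x i‖^2) (fun i _ => sq_nonneg _)
            (Finset.mem_univ k))
  -- integrability of η
  have hηint : ∀ j, Integrable (η j) P := by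
    intro j
    obtain ⟨M, hM0, hM⟩ : ∃ M : ℝ, 0 ≤ M ∧ ∀ x, ‖x‖ ≤ M * ‖S x‖ := by
      let Te : EuclideanSpace ℝ (Fin K) ≃ₗ[ℝ] EuclideanSpace ℝ (Fin K) :=
        LinearEquiv.ofBijective S.toLinearMap hS
      let T := Te.toContinuousLinearEquiv
      refine ⟨‖(T.symm : EuclideanSpace ℝ (Fin K) →L[ℝ] EuclideanSpace ℝ (Fin K))‖,
        norm_nonneg _, fun x => ?_⟩
      have h : T.symm (S x) = x := Te.symm_apply_apply x
      calc ‖x‖ = ‖(T.symm : EuclideanSpace ℝ (Fin K) →L[ℝ] EuclideanSpace ℝ (Fin K)) (S x)‖ := by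
            rw [ContinuousLinearEquiv.coe_coe, h]
        _ ≤ _ := ContinuousLinearMap.le_opNorm _ _
    refine Integrable.mono' (((integrable_const (1:ℝ)).add (hKint j)).const_mul M)
      (hηmeas j).aestronglyMeasurable (Filter.Eventually.of_forall fun ω => ?_)
    have h2 : ‖S (η j ω)‖ ≤ 1 + ‖S (η j ω)‖^2 := by nlinarith [sq_nonneg (‖S (η j ω)‖ - 1)]
    calc ‖η j ω‖ ≤ M * ‖S (η j ω)‖ := hM _
      _ ≤ M * (1 + ‖S (η j ω)‖^2) := by nlinarith
  have hSηmeas : ∀ j, Measurable fun ω => S (η j ω) :=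
    fun j => S.continuous.measurable.comp (hηmeas j)
  have hkmeas : ∀ j (k : Fin K), Measurable fun ω => S (η j ω) k :=
    fun j k => (((EuclideanSpace.proj (𝕜 := ℝ) k).comp S).continuous.measurable).comp (hηmeas j)
  -- mean zero of coordinates of S η j
  have hmean : ∀ j (k : Fin K), (∫ ω, S (η j ω) k ∂P) = 0 := by
    intro j k
    have := ((EuclideanSpace.proj (𝕜 := ℝ) k).comp S).integral_comp_comm (hηint j)
    simpa [hcent j] using this
  -- coordinates of S η j are integrable
  have hcoordint : ∀ j (k : Fin K), Integrable (fun ω => S (η j ω) k) P := by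
    intro j k
    refine Integrable.mono' ((integrable_const (1:ℝ)).add (hKint j))
      (hkmeas j k).aestronglyMeasurable (Filter.Eventually.of_forall fun ω => ?_)
    have h1 : |S (η j ω) k| ≤ ‖S (η j ω)‖ := hcoord_le _ k
    have h2 : ‖S (η j ω)‖ ≤ 1 + ‖S (η j ω)‖^2 := by nlinarith [sq_nonneg (‖S (η j ω)‖ - 1)]
    calc ‖S (η j ω) k‖ = |S (η j ω) k| := Real.norm_eq_abs _
      _ ≤ 1 + ‖S (η j ω)‖^2 := h1.trans h2
  -- cross terms vanish
  have hcross : ∀ i j, i ≠ j → (∫ ω, ⟪S (η i ω), S (η j ω)⟫ ∂P) = 0 := by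
    intro i j hij
    have hinner : ∀ ω : Ω, ⟪S (η i ω), S (η j ω)⟫ = ∑ k, S (η i ω) k * S (η j ω) k := by
      intro ω; simp [PiLp.inner_apply, RCLike.inner_apply, conj_trivial]; exact Finset.sum_congr rfl fun _ _ => mul_comm _ _
    have hind : ∀ k : Fin K,
        IndepFun (fun ω => S (η i ω) k) (fun ω => S (η j ω) k) P := fun k =>
      (hindep.indepFun hij).comp
        (((EuclideanSpace.proj (𝕜 := ℝ) k).comp S).continuous.measurable)
        (((EuclideanSpace.proj (𝕜 := ℝ) k).comp S).continuous.measurable)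
    rw [integral_congr_ae (Filter.Eventually.of_forall hinner), integral_finset_sum]
    · refine Finset.sum_eq_zero fun k _ => ?_
      have h := (hind k).integral_fun_mul_eq_mul_integral (hkmeas i k).aestronglyMeasurable
        (hkmeas j k).aestronglyMeasurable
      calc (∫ ω, S (η i ω) k * S (η j ω) k ∂P)
          = (∫ ω, S (η i ω) k ∂P) * (∫ ω, S (η j ω) k ∂P) := h
        _ = 0 := by rw [hmean i k, hmean j k]; ring
    · intro k _
      exact (hind k).integrable_mul (hcoordint i k) (hcoordint j k)
  -- integrability of inner products
  have hinner_int : ∀ i j, Integrable (fun ω => ⟪S (η i ω), S (η j ω)⟫) P := by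
    intro i j
    refine Integrable.mono' (((hKint i).add (hKint j)).const_mul (1/2))
      ((hSηmeas i).inner (hSηmeas j)).aestronglyMeasurable
      (Filter.Eventually.of_forall fun ω => ?_)
    have h1 : |⟪S (η i ω), S (η j ω)⟫| ≤ ‖S (η i ω)‖ * ‖S (η j ω)‖ :=
      abs_real_inner_le_norm _ _
    have h2 : ‖S (η i ω)‖ * ‖S (η j ω)‖ ≤ (‖S (η i ω)‖^2 + ‖S (η j ω)‖^2) / 2 := by
      nlinarith [sq_nonneg (‖S (η i ω)‖ - ‖S (η j ω)‖)]
    calc ‖⟪S (η i ω), S (η j ω)⟫‖ = |⟪S (η i ω), S (η j ω)⟫| := Real.norm_eq_abs _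
      _ ≤ (‖S (η i ω)‖^2 + ‖S (η j ω)‖^2) / 2 := h1.trans h2
      _ = 1/2 * (‖S (η i ω)‖^2 + ‖S (η j ω)‖^2) := by ring
  -- ‖A n ω‖² as a double sum of inner products
  have hAsq : ∀ n (ω : Ω), ‖A n ω‖^2
      = ∑ i ∈ Finset.range n, ∑ j ∈ Finset.range n, ⟪S (η i ω), S (η j ω)⟫ := by
    intro n ω
    rw [← real_inner_self_eq_norm_sq, hAdef]
    simp only
    rw [sum_inner]
    exact Finset.sum_congr rfl fun i _ => inner_sum _ _ _
  have hAint : ∀ n, Integrable (fun ω => ‖A n ω‖^2) P := by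
    intro n
    refine (integrable_finset_sum _ fun i _ => integrable_finset_sum _ fun j _ =>
      hinner_int i j).congr (Filter.Eventually.of_forall fun ω => (hAsq n ω).symm)
  have hAval : ∀ n, (∫ ω, ‖A n ω‖^2 ∂P) = n * Kc := by
    intro n
    rw [integral_congr_ae (Filter.Eventually.of_forall (hAsq n))]
    rw [integral_finset_sum _ fun i _ => integrable_finset_sum _ fun j _ => hinner_int i j]
    have : ∀ i ∈ Finset.range n,
        (∫ ω, ∑ j ∈ Finset.range n, ⟪S (η i ω), S (η j ω)⟫ ∂P) = Kc := by
      intro i hi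
      rw [integral_finset_sum _ fun j _ => hinner_int i j]
      rw [Finset.sum_eq_single i (fun j _ hji => hcross i j (Ne.symm hji)) (fun h => absurd hi h)]
      rw [← hKc i]
      exact integral_congr_ae (Filter.Eventually.of_forall fun ω =>
        real_inner_self_eq_norm_sq _)
    rw [Finset.sum_congr rfl this, Finset.sum_const, Finset.card_range, nsmul_eq_mul]
  -- pointwise key inequality
  have key : ∀ n : ℕ, 1 ≤ n → ∀ ω : Ω,
      ‖u n ω‖^2 + ((n:ℝ)/2) * ‖b n ω‖^2
        ≤ ‖udag‖^2 + (2/(n:ℝ)) * ‖A n ω‖^2 := by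
    intro n hn ω
    have hn' : (1:ℝ) ≤ (n:ℝ) := by exact_mod_cast hn
    have hnpos : (0:ℝ) < (n:ℝ) := by linarith
    have h1 := hmin n ω udag
    have hrw : ∀ j, S (G (ι udag) + η j ω - G (ι (u n ω))) = S (η j ω) + b n ω := by
      intro j
      rw [hbdef]; simp only [← map_add]; congr 1; abel
    have hrw2 : ∀ j, G (ι udag) + η j ω - G (ι udag) = η j ω := fun j => by abel
    simp only [hrw, add_sub_cancel_left] at h1
    simp only [norm_add_sq_real] at h1
    rw [Finset.sum_add_distrib, Finset.sum_add_distrib,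
      Finset.sum_const, Finset.card_range, ← Finset.mul_sum, ← sum_inner,
      nsmul_eq_mul] at h1
    have hAeq : (∑ j ∈ Finset.range n, S (η j ω)) = A n ω := rfl
    rw [hAeq] at h1
    -- h1 : ‖u‖² + (Σ‖Sη‖² + 2⟪A,b⟫ + n‖b‖²) ≤ ‖udag‖² + Σ‖Sη‖²
    have hCS : -(‖A n ω‖ * ‖b n ω‖) ≤ ⟪A n ω, b n ω⟫ := by
      have := abs_real_inner_le_norm (A n ω) (b n ω)
      cases abs_le.mp this with
      | intro h _ => linarith
    have hyoung : 2 * (‖A n ω‖ * ‖b n ω‖)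
        ≤ 2/(n:ℝ) * ‖A n ω‖^2 + (n:ℝ)/2 * ‖b n ω‖^2 := by
      have heq : 2/(n:ℝ) * ‖A n ω‖^2 + (n:ℝ)/2 * ‖b n ω‖^2 - 2 * (‖A n ω‖ * ‖b n ω‖)
          = ((n:ℝ) * ‖b n ω‖ - 2 * ‖A n ω‖)^2 / (2 * (n:ℝ)) := by
        field_simp
        ring
      nlinarith [div_nonneg (sq_nonneg ((n:ℝ) * ‖b n ω‖ - 2 * ‖A n ω‖))
        (by linarith : (0:ℝ) ≤ 2 * (n:ℝ))]
    have hsplit : (n:ℝ) * ‖b n ω‖^2 = (n:ℝ)/2 * ‖b n ω‖^2 + (n:ℝ)/2 * ‖b n ω‖^2 := by ring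
    linarith
  -- main integral inequality
  have main : ∀ n : ℕ, 1 ≤ n →
      (∫ ω, ‖u n ω‖^2 ∂P) + ((n:ℝ)/2) * (∫ ω, ‖b n ω‖^2 ∂P) ≤ ‖udag‖^2 + 2 * Kc := by
    intro n hn
    have hn' : (0:ℝ) < (n:ℝ) := by exact_mod_cast hn
    have hL : Integrable (fun ω => ‖u n ω‖^2 + ((n:ℝ)/2) * ‖b n ω‖^2) P :=
      (huint n).add ((hGint n).const_mul _)
    have hR : Integrable (fun ω => ‖udag‖^2 + (2/(n:ℝ)) * ‖A n ω‖^2) P :=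
      (integrable_const _).add ((hAint n).const_mul _)
    have := integral_mono hL hR (key n hn)
    rw [integral_add (huint n) ((hGint n).const_mul _),
      integral_add (integrable_const _) ((hAint n).const_mul _),
      integral_const_mul, integral_const_mul, integral_const, hAval n] at this
    have hmeasone : P.real Set.univ = 1 := by simp
    rw [hmeasone, smul_eq_mul, one_mul] at this
    have hsimp : 2/(n:ℝ) * ((n:ℝ) * Kc) = 2 * Kc := by field_simp
    rw [hsimp] at this
    exact this
  have hbnonneg : ∀ n, 0 ≤ (∫ ω, ‖b n ω‖^2 ∂P) :=
    fun n => integral_nonneg fun ω => sq_nonneg _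
  have hunonneg : ∀ n, 0 ≤ (∫ ω, ‖u n ω‖^2 ∂P) :=
    fun n => integral_nonneg fun ω => sq_nonneg _
  have hfirst : ∀ n : ℕ, 1 ≤ n →
      (∫ ω, ‖b n ω‖^2 ∂P) ≤ (2/(n:ℝ)) * (‖udag‖^2 + 2 * Kc) := by
    intro n hn
    have hn' : (0:ℝ) < (n:ℝ) := by exact_mod_cast hn
    have h2 : ((n:ℝ)/2) * (∫ ω, ‖b n ω‖^2 ∂P) ≤ ‖udag‖^2 + 2 * Kc := by
      have := main n hn; linarith [hunonneg n]
    have heq : (∫ ω, ‖b n ω‖^2 ∂P)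
        = 2/(n:ℝ) * (((n:ℝ)/2) * (∫ ω, ‖b n ω‖^2 ∂P)) := by
      field_simp
    rw [heq]
    exact mul_le_mul_of_nonneg_left h2 (by positivity)
  simp only [hbdef] at hbnonneg hfirst main
  refine ⟨fun n hn => ⟨hfirst n hn, ?_⟩, ?_⟩
  · have hn' : (0:ℝ) < (n:ℝ) := by exact_mod_cast hn
    have hm := main n hn
    have hnn : 0 ≤ ((n:ℝ)/2) * (∫ ω, ‖S (G (ι udag) - G (ι (u n ω)))‖^2 ∂P) :=
      mul_nonneg (by positivity) (hbnonneg n)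
    linarith only [hm, hnn]
  · have gt0 : Tendsto (fun n : ℕ => (2 * (‖udag‖^2 + 2 * Kc)) / (n:ℝ)) atTop (𝓝 0) :=
      tendsto_const_div_atTop_nhds_zero_nat _
    refine squeeze_zero' (Filter.Eventually.of_forall fun n => hbnonneg n) ?_ gt0
    filter_upwards [Filter.eventually_ge_atTop 1] with n hn
    calc (∫ ω, ‖S (G (ι udag) - G (ι (u n ω)))‖^2 ∂P)
        ≤ (2/(n:ℝ)) * (‖udag‖^2 + 2 * Kc) := hfirst n hn
      _ = (2 * (‖udag‖^2 + 2 * Kc)) / (n:ℝ) := by ring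
end

section
/- Let E be a Hilbert space dense in a Banach space X, let 𝒢 : X → ℝᴷ be Lipschitz on bounded sets, and u† ∈ X. Let yⱼ = 𝒢(u†) + ηⱼ with i.i.d. centered noise satisfying E|C₁^{-1/2}η₁|² = K < ∞, and uₙ a minimizer over E of Iₙ(u) = ‖u‖_E² + Σ_{j=1}^{n}|yⱼ − 𝒢(u)|²_{C₁}. Then lim_{n→∞} E|𝒢(u†) − 𝒢(uₙ)|²_{C₁} = 0, and hence some subsequence of 𝒢(uₙ) converges to 𝒢(u†) almost surely. -/
open MeasureTheory Filter ProbabilityTheory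
open scoped Topology

open scoped ENNReal

lemma coord_abs_le_norm {K : ℕ} (x : EuclideanSpace ℝ (Fin K)) (k : Fin K) : |x k| ≤ ‖x‖ := by
  rw [EuclideanSpace.norm_eq, ← Real.sqrt_sq_eq_abs]
  refine Real.sqrt_le_sqrt ?_
  have := Finset.single_le_sum (f := fun i => ‖x i‖^2) (fun i _ => by positivity)
    (Finset.mem_univ k)
  simpa [Real.norm_eq_abs, sq_abs] using this

lemma norm_sq_eq_sum {K : ℕ} (x : EuclideanSpace ℝ (Fin K)) : ‖x‖^2 = ∑ k, (x k)^2 := by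
  rw [EuclideanSpace.norm_eq, Real.sq_sqrt (by positivity)]
  simp [Real.norm_eq_abs, sq_abs]

lemma sum_coord {K : ℕ} {Ω : Type*} (a : ℕ → Ω → EuclideanSpace ℝ (Fin K)) (n : ℕ)
    (ω : Ω) (k : Fin K) :
    (∑ j ∈ Finset.range n, a j ω) k = ∑ j ∈ Finset.range n, a j ω k := by
  induction n with
  | zero => simp
  | succ n ih => rw [Finset.sum_range_succ, Finset.sum_range_succ, ← ih]; rfl

lemma expand_sum {H : Type*} [NormedAddCommGroup H] [InnerProductSpace ℝ H]
    (n : ℕ) (aa : ℕ → H) (C : H) :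
    ∑ j ∈ Finset.range n, ‖aa j + C‖^2
      = (∑ j ∈ Finset.range n, ‖aa j‖^2)
        + 2*(inner ℝ (∑ j ∈ Finset.range n, aa j) C) + n*‖C‖^2 := by
  induction n with
  | zero => simp
  | succ m ih =>
    simp only [Finset.sum_range_succ, ih, norm_add_sq_real, inner_add_left, Nat.cast_succ]
    rw [Finset.sum_add_distrib, Finset.sum_add_distrib, ← Finset.mul_sum, ← sum_inner,
      Finset.sum_const, Finset.card_range, nsmul_eq_mul]
    ring

lemma pointwise_bound {H : Type*} [NormedAddCommGroup H] [InnerProductSpace ℝ H]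
    (n : ℕ) (A b c : H) (V : ℝ) (_hV : 0 ≤ V)
    (h : (n:ℝ)*‖b‖^2 + 2*(inner ℝ A b) ≤ V + n*‖c‖^2 + 2*(inner ℝ A c)) :
    (n:ℝ)^2*‖b‖^2 ≤ 2*n*V + 3*(n:ℝ)^2*‖c‖^2 + 8*‖A‖^2 := by
  have h1 : (inner ℝ A c) - (inner ℝ A b) ≤ ‖A‖ * ‖c - b‖ := by
    rw [← inner_sub_right]; exact real_inner_le_norm A (c - b)
  have h2 : ‖c - b‖ ≤ ‖c‖ + ‖b‖ := norm_sub_le c b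
  have hb := norm_nonneg b; have hc := norm_nonneg c; have hA := norm_nonneg A
  have hcb := norm_nonneg (c - b)
  have hn : (0:ℝ) ≤ n := Nat.cast_nonneg n
  have h3 := mul_le_mul_of_nonneg_left h hn
  have h4 := mul_le_mul_of_nonneg_left h1 hn
  have h5 := mul_le_mul_of_nonneg_left h2 (mul_nonneg hn hA)
  nlinarith [sq_nonneg (2*‖A‖ - ((n:ℝ)/2)*(‖b‖+‖c‖)), mul_nonneg hn _hV,
    sq_nonneg ((n:ℝ)*(‖b‖-‖c‖))]

lemma second_moment_sum {Ω : Type*} [MeasurableSpace Ω] {P : Measure Ω}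
    [IsProbabilityMeasure P] {K : ℕ} {a : ℕ → Ω → EuclideanSpace ℝ (Fin K)}
    (hmeas : ∀ j, Measurable (a j))
    (hindep : iIndepFun a P)
    (hL2 : ∀ j, Integrable (fun ω => ‖a j ω‖^2) P)
    (hcent : ∀ j, ∫ ω, a j ω ∂P = 0) (n : ℕ) :
    ∫ ω, ‖∑ j ∈ Finset.range n, a j ω‖^2 ∂P
      = ∑ j ∈ Finset.range n, ∫ ω, ‖a j ω‖^2 ∂P := by
  classical
  set f : ℕ → Fin K → Ω → ℝ := fun j k ω => a j ω k with hf
  have hfm : ∀ j k, Measurable (f j k) := fun j k =>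
    ((EuclideanSpace.proj (𝕜 := ℝ) k).continuous.measurable).comp (hmeas j)
  have hMp : ∀ j k, MemLp (f j k) 2 P := by
    intro j k
    rw [memLp_two_iff_integrable_sq (hfm j k).aestronglyMeasurable]
    refine (hL2 j).mono' ((hfm j k).pow_const 2).aestronglyMeasurable ?_
    filter_upwards with ω
    have h1 : |a j ω k| ≤ ‖a j ω‖ := coord_abs_le_norm _ _
    have : (f j k ω)^2 ≤ ‖a j ω‖^2 := by
      rw [← sq_abs]; exact pow_le_pow_left₀ (abs_nonneg _) h1 2
    simpa [Real.norm_eq_abs, abs_of_nonneg (sq_nonneg (f j k ω))] using this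
  have haint : ∀ j, Integrable (a j) P := by
    intro j
    refine ((hL2 j).add (integrable_const 1)).mono' (hmeas j).aestronglyMeasurable ?_
    filter_upwards with ω
    simp only [Pi.add_apply, norm_norm]
    nlinarith [norm_nonneg (a j ω), sq_nonneg (‖a j ω‖ - 1)]
  have hmean : ∀ j k, ∫ ω, f j k ω ∂P = 0 := by
    intro j k
    have := (EuclideanSpace.proj (𝕜 := ℝ) k).integral_comp_comm (haint j)
    rw [hcent j] at this
    simpa using this
  have hint2 : ∀ j k, Integrable (fun ω => (f j k ω)^2) P := fun j k =>
    (memLp_two_iff_integrable_sq (hfm j k).aestronglyMeasurable).1 (hMp j k)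
  -- variance computation per coordinate
  have key : ∀ k : Fin K, ∫ ω, (∑ j ∈ Finset.range n, f j k ω)^2 ∂P
      = ∑ j ∈ Finset.range n, ∫ ω, (f j k ω)^2 ∂P := by
    intro k
    have hpair : Set.Pairwise ↑(Finset.range n)
        (fun i j => IndepFun (f i k) (f j k) P) := by
      intro i _ j _ hij
      exact (hindep.indepFun hij).comp
        (EuclideanSpace.proj (𝕜 := ℝ) k).continuous.measurable
        (EuclideanSpace.proj (𝕜 := ℝ) k).continuous.measurable
    have hvar := IndepFun.variance_sum (μ := P) (X := fun j => f j k)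
      (s := Finset.range n) (fun j _ => hMp j k) hpair
    have hMps : MemLp (∑ j ∈ Finset.range n, f j k) 2 P :=
      memLp_finset_sum' _ (fun j _ => hMp j k)
    have hvd := variance_eq_sub (μ := P) hMps
    have hmean0 : ∫ ω, (∑ j ∈ Finset.range n, f j k) ω ∂P = 0 := by
      have h1 : ∫ ω, (∑ j ∈ Finset.range n, f j k) ω ∂P
          = ∑ j ∈ Finset.range n, ∫ ω, f j k ω ∂P := by
        simp only [Finset.sum_apply]
        exact integral_finset_sum _ (fun j _ => (hMp j k).integrable one_le_two)
      rw [h1]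
      exact Finset.sum_eq_zero fun j _ => hmean j k
    have hvdj : ∀ j, variance (f j k) P = ∫ ω, (f j k ω)^2 ∂P := by
      intro j
      rw [variance_eq_sub (hMp j k), hmean j k]
      simp [Pi.pow_apply]
    calc ∫ ω, (∑ j ∈ Finset.range n, f j k ω)^2 ∂P
        = ∫ ω, ((∑ j ∈ Finset.range n, f j k) ^ 2) ω ∂P := by
          congr 1; ext ω; simp [Finset.sum_apply]
      _ = variance (∑ j ∈ Finset.range n, f j k) P := by
          rw [hvd, hmean0]; simp
      _ = ∑ j ∈ Finset.range n, variance (f j k) P := hvar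
      _ = ∑ j ∈ Finset.range n, ∫ ω, (f j k ω)^2 ∂P :=
          Finset.sum_congr rfl fun j _ => hvdj j
  -- assemble
  have hsumint : ∀ k : Fin K, Integrable (fun ω => (∑ j ∈ Finset.range n, f j k ω)^2) P := by
    intro k
    have := (memLp_two_iff_integrable_sq
      (memLp_finset_sum' (μ := P) (Finset.range n) (fun j _ => hMp j k)).aestronglyMeasurable).1
      (memLp_finset_sum' _ (fun j _ => hMp j k))
    refine this.congr ?_
    filter_upwards with ω
    simp [Finset.sum_apply]
  calc ∫ ω, ‖∑ j ∈ Finset.range n, a j ω‖^2 ∂P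
      = ∫ ω, ∑ k, (∑ j ∈ Finset.range n, f j k ω)^2 ∂P := by
        congr 1; ext ω
        rw [norm_sq_eq_sum]
        exact Finset.sum_congr rfl fun k _ => by rw [sum_coord]
    _ = ∑ k, ∫ ω, (∑ j ∈ Finset.range n, f j k ω)^2 ∂P :=
        integral_finset_sum _ (fun k _ => hsumint k)
    _ = ∑ k, ∑ j ∈ Finset.range n, ∫ ω, (f j k ω)^2 ∂P :=
        Finset.sum_congr rfl fun k _ => key k
    _ = ∑ j ∈ Finset.range n, ∑ k, ∫ ω, (f j k ω)^2 ∂P := Finset.sum_comm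
    _ = ∑ j ∈ Finset.range n, ∫ ω, ∑ k, (f j k ω)^2 ∂P :=
        Finset.sum_congr rfl fun j _ => (integral_finset_sum _ (fun k _ => hint2 j k)).symm
    _ = ∑ j ∈ Finset.range n, ∫ ω, ‖a j ω‖^2 ∂P := by
        refine Finset.sum_congr rfl fun j _ => ?_
        congr 1; ext ω; rw [norm_sq_eq_sum]

/-- Corollary 4.2: E (Hilbert) densely embedded in X (Banach), 𝒢 : X → ℝᴷ
Lipschitz on bounded sets, truth u† ∈ X only. With yⱼ = 𝒢(u†) + ηⱼ for i.i.d.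
centered noise with E|C₁^{-1/2}η|² = K and uₙ minimising
Iₙ(u) = ‖u‖_E² + Σ_{j<n}|yⱼ − 𝒢(u)|²_{C₁} over E, one has
E|𝒢(u†) − 𝒢(uₙ)|²_{C₁} → 0, and hence a subsequence of 𝒢(uₙ) converges to
𝒢(u†) almost surely. -/
theorem stmt12 {E X : Type*} [NormedAddCommGroup E] [InnerProductSpace ℝ E]
    [CompleteSpace E] [TopologicalSpace.SeparableSpace E]
    [NormedAddCommGroup X] [NormedSpace ℝ X] [CompleteSpace X]
    (ι : E →L[ℝ] X) (hinj : Function.Injective ι) (hdense : DenseRange ι)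
    {K : ℕ} (G : X → EuclideanSpace ℝ (Fin K))
    (hGlip : ∀ r > 0, ∃ L > 0, ∀ u v : X, ‖u‖ ≤ r → ‖v‖ ≤ r →
      ‖G u - G v‖ ≤ L * ‖u - v‖)
    (S : EuclideanSpace ℝ (Fin K) →L[ℝ] EuclideanSpace ℝ (Fin K))
    (hS : Function.Bijective S)
    {Ω : Type*} [MeasurableSpace Ω] (P : Measure Ω) [IsProbabilityMeasure P]
    (η : ℕ → Ω → EuclideanSpace ℝ (Fin K))
    (hηmeas : ∀ j, Measurable (η j))
    (hindep : iIndepFun η P)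
    (hident : ∀ j, P.map (η j) = P.map (η 0))
    (hcent : ∀ j, (∫ ω, η j ω ∂P) = 0)
    (Kc : ℝ)
    (hKint : ∀ j, Integrable (fun ω => ‖S (η j ω)‖^2) P)
    (hKc : ∀ j, (∫ ω, ‖S (η j ω)‖^2 ∂P) = Kc)
    (udag : X) (u : ℕ → Ω → E)
    (hmin : ∀ n ω, ∀ w : E,
      ‖u n ω‖^2 + ∑ j ∈ Finset.range n, ‖S (G udag + η j ω - G (ι (u n ω)))‖^2
        ≤ ‖w‖^2 + ∑ j ∈ Finset.range n, ‖S (G udag + η j ω - G (ι w))‖^2)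
    (hGint : ∀ n, Integrable (fun ω => ‖S (G udag - G (ι (u n ω)))‖^2) P)
    (huint : ∀ n, Integrable (fun ω => ‖u n ω‖^2) P) :
    Tendsto (fun n => ∫ ω, ‖S (G udag - G (ι (u n ω)))‖^2 ∂P) atTop (𝓝 0) ∧
    ∃ φ : ℕ → ℕ, StrictMono φ ∧
      ∀ᵐ ω ∂P, Tendsto (fun k => G (ι (u (φ k) ω))) atTop (𝓝 (G udag)) := by
  classical
  -- the noise images
  set a : ℕ → Ω → EuclideanSpace ℝ (Fin K) := fun j ω => S (η j ω) with ha
  have hameas : ∀ j, Measurable (a j) := fun j =>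
    S.continuous.measurable.comp (hηmeas j)
  have haindep : iIndepFun a P :=
    hindep.comp (fun _ => (S : EuclideanSpace ℝ (Fin K) → EuclideanSpace ℝ (Fin K)))
      (fun _ => S.continuous.measurable)
  have hMa : ∀ j, MemLp (a j) 2 P := fun j =>
    (memLp_two_iff_integrable_sq_norm (hameas j).aestronglyMeasurable).2 (hKint j)
  -- the inverse bound for S
  have hKc0 : 0 ≤ Kc := by
    rw [← hKc 0]; exact integral_nonneg fun ω => by positivity
  obtain ⟨c0, hc01, hc0⟩ : ∃ c0 : ℝ, 1 ≤ c0 ∧ ∀ x, ‖x‖ ≤ c0 * ‖S x‖ := by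
    let e : EuclideanSpace ℝ (Fin K) ≃ₗ[ℝ] EuclideanSpace ℝ (Fin K) :=
      LinearEquiv.ofBijective S.toLinearMap hS
    let E' := e.toContinuousLinearEquiv
    refine ⟨max 1 ‖(E'.symm.toContinuousLinearMap)‖, le_max_left _ _, fun x => ?_⟩
    have hx : E'.symm (S x) = x := E'.symm_apply_apply x
    calc ‖x‖ = ‖E'.symm.toContinuousLinearMap (S x)‖ := by
          rw [show E'.symm.toContinuousLinearMap (S x) = E'.symm (S x) from rfl, hx]
      _ ≤ ‖E'.symm.toContinuousLinearMap‖ * ‖S x‖ :=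
          (E'.symm.toContinuousLinearMap).le_opNorm (S x)
      _ ≤ max 1 ‖(E'.symm.toContinuousLinearMap)‖ * ‖S x‖ := by
          apply mul_le_mul_of_nonneg_right (le_max_right _ _) (norm_nonneg _)
  -- integrability and centering of a
  have hηint : ∀ j, Integrable (η j) P := by
    intro j
    refine (((hMa j).integrable one_le_two).norm.const_mul c0).mono'
      (hηmeas j).aestronglyMeasurable ?_
    filter_upwards with ω
    simpa using hc0 (η j ω)
  have hacent : ∀ j, ∫ ω, a j ω ∂P = 0 := by
    intro j
    have := S.integral_comp_comm (hηint j)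
    rw [hcent j] at this
    simpa [ha] using this
  -- integrability of ‖∑ a j‖²
  have hAint : ∀ n, Integrable (fun ω => ‖∑ j ∈ Finset.range n, a j ω‖^2) P := by
    intro n
    have hsum : MemLp (fun ω => ∑ j ∈ Finset.range n, a j ω) 2 P :=
      memLp_finset_sum _ (fun j _ => hMa j)
    exact (memLp_two_iff_integrable_sq_norm hsum.aestronglyMeasurable).1 hsum
  have hA2 : ∀ n, ∫ ω, ‖∑ j ∈ Finset.range n, a j ω‖^2 ∂P = n * Kc := by
    intro n
    rw [second_moment_sum hameas haindep hKint hacent n]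
    simp [ha, hKc, Finset.sum_const, Finset.card_range, nsmul_eq_mul]
  set I : ℕ → ℝ := fun n => ∫ ω, ‖S (G udag - G (ι (u n ω)))‖^2 ∂P with hI
  have hIpos : ∀ n, 0 ≤ I n := fun n => integral_nonneg fun ω => by positivity
  -- the main integral bound
  have hbound : ∀ v : E, ∀ n : ℕ, 1 ≤ n →
      I n ≤ 2*‖v‖^2/n + 3*‖S (G udag - G (ι v))‖^2 + 8*Kc/n := by
    intro v n hn
    have hn0 : (0:ℝ) < n := by exact_mod_cast hn
    have hn2 : (0:ℝ) < (n:ℝ)^2 := by positivity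
    set cv : EuclideanSpace ℝ (Fin K) := S (G udag - G (ι v)) with hcv
    have hptw : ∀ ω, ‖S (G udag - G (ι (u n ω)))‖^2
        ≤ 2*‖v‖^2/n + 3*‖cv‖^2 + (8/(n:ℝ)^2)*‖∑ j ∈ Finset.range n, a j ω‖^2 := by
      intro ω
      set b : EuclideanSpace ℝ (Fin K) := S (G udag - G (ι (u n ω))) with hb
      set A : EuclideanSpace ℝ (Fin K) := ∑ j ∈ Finset.range n, a j ω with hA
      have hrw : ∀ w : E, ∀ j, S (G udag + η j ω - G (ι w))
          = a j ω + S (G udag - G (ι w)) := by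
        intro w j
        rw [ha]; rw [← map_add]; congr 1; abel
      have hexp : ∀ w : E, ∑ j ∈ Finset.range n, ‖S (G udag + η j ω - G (ι w))‖^2
          = (∑ j ∈ Finset.range n, ‖a j ω‖^2)
            + 2*(inner ℝ A (S (G udag - G (ι w)))) + n*‖S (G udag - G (ι w))‖^2 := by
        intro w
        have h1 : ∑ j ∈ Finset.range n, ‖S (G udag + η j ω - G (ι w))‖^2
            = ∑ j ∈ Finset.range n, ‖a j ω + S (G udag - G (ι w))‖^2 :=
          Finset.sum_congr rfl fun j _ => by rw [hrw w j]
        rw [h1, expand_sum]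
      have hmin' := hmin n ω v
      rw [hexp v, hexp (u n ω)] at hmin'
      have hkey : (n:ℝ)*‖b‖^2 + 2*(inner ℝ A b)
          ≤ ‖v‖^2 + n*‖cv‖^2 + 2*(inner ℝ A cv) := by
        have hu2 : 0 ≤ ‖u n ω‖^2 := by positivity
        linarith [hmin']
      have hmul := pointwise_bound n A b cv (‖v‖^2) (by positivity) hkey
      have heq : (n:ℝ)^2*(2*‖v‖^2/n + 3*‖cv‖^2 + (8/(n:ℝ)^2)*‖A‖^2)
          = 2*n*‖v‖^2 + 3*(n:ℝ)^2*‖cv‖^2 + 8*‖A‖^2 := by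
        field_simp
      have : (n:ℝ)^2*‖b‖^2 ≤ (n:ℝ)^2*(2*‖v‖^2/n + 3*‖cv‖^2 + (8/(n:ℝ)^2)*‖A‖^2) := by
        rw [heq]; exact hmul
      exact le_of_mul_le_mul_left this hn2
    have hint2 : Integrable (fun ω => 2*‖v‖^2/n + 3*‖cv‖^2
        + (8/(n:ℝ)^2)*‖∑ j ∈ Finset.range n, a j ω‖^2) P := by
      exact (integrable_const _).add ((hAint n).const_mul _)
    calc I n ≤ ∫ ω, (2*‖v‖^2/n + 3*‖cv‖^2
          + (8/(n:ℝ)^2)*‖∑ j ∈ Finset.range n, a j ω‖^2) ∂P :=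
        integral_mono (hGint n) hint2 hptw
      _ = (2*‖v‖^2/n + 3*‖cv‖^2) + (8/(n:ℝ)^2)*(n*Kc) := by
          rw [integral_add (integrable_const _) ((hAint n).const_mul _),
            integral_const, integral_const_mul, hA2 n]
          simp
      _ = 2*‖v‖^2/n + 3*‖cv‖^2 + 8*Kc/n := by
          have : (8/(n:ℝ)^2)*(n*Kc) = 8*Kc/n := by
            field_simp
          rw [this]
  -- the limit
  have htend : Tendsto I atTop (𝓝 0) := by
    rw [Metric.tendsto_atTop]
    intro ε hε
    -- choose a good v
    obtain ⟨L, hL, hlip⟩ := hGlip (‖udag‖ + 1) (by positivity)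
    set δ : ℝ := min 1 (Real.sqrt (ε/6) / (‖S‖*L + 1)) with hδ
    have hSL : (0:ℝ) < ‖S‖*L + 1 :=
      add_pos_of_nonneg_of_pos (mul_nonneg (norm_nonneg _) hL.le) one_pos
    have hδ0 : 0 < δ := by
      refine lt_min one_pos ?_
      exact div_pos (Real.sqrt_pos.2 (by linarith)) hSL
    obtain ⟨v, hv⟩ := hdense.exists_dist_lt udag hδ0
    rw [dist_comm, dist_eq_norm] at hv
    have hιv : ‖ι v‖ ≤ ‖udag‖ + 1 := by
      have h1 : ‖ι v‖ ≤ ‖udag‖ + ‖ι v - udag‖ := norm_le_insert' (ι v) udag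
      have h2 : δ ≤ 1 := min_le_left _ _
      linarith
    have hcvb : ‖S (G udag - G (ι v))‖ ≤ Real.sqrt (ε/6) := by
      have h1 : ‖G udag - G (ι v)‖ ≤ L * ‖udag - ι v‖ :=
        hlip udag (ι v) (by linarith) hιv
      have h2 : ‖S (G udag - G (ι v))‖ ≤ ‖S‖ * ‖G udag - G (ι v)‖ := S.le_opNorm _
      have h3 : ‖udag - ι v‖ < δ := by rwa [← norm_neg, neg_sub] at hv
      have h4 : δ ≤ Real.sqrt (ε/6) / (‖S‖*L + 1) := min_le_right _ _
      have h5 : (0:ℝ) < ‖S‖*L + 1 := hSL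
      have h6 : ‖S‖ * L * δ ≤ Real.sqrt (ε/6) := by
        rw [div_eq_inv_mul] at h4
        have := mul_le_mul_of_nonneg_left h4 (le_of_lt h5)
        calc ‖S‖ * L * δ ≤ (‖S‖*L + 1) * δ := by
              apply mul_le_mul_of_nonneg_right (by linarith) (le_of_lt hδ0)
          _ ≤ (‖S‖*L + 1) * ((‖S‖*L + 1)⁻¹ * Real.sqrt (ε/6)) := by
              apply mul_le_mul_of_nonneg_left h4 (le_of_lt h5)
          _ = Real.sqrt (ε/6) := by
              rw [← mul_assoc, mul_inv_cancel₀ (ne_of_gt h5), one_mul]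
      calc ‖S (G udag - G (ι v))‖ ≤ ‖S‖ * (L * ‖udag - ι v‖) := by
            refine h2.trans (mul_le_mul_of_nonneg_left h1 (norm_nonneg _))
        _ ≤ ‖S‖ * (L * δ) := by
            apply mul_le_mul_of_nonneg_left ?_ (norm_nonneg _)
            apply mul_le_mul_of_nonneg_left (le_of_lt h3) (le_of_lt hL)
        _ = ‖S‖ * L * δ := by ring
        _ ≤ Real.sqrt (ε/6) := h6
    have hcv2 : 3*‖S (G udag - G (ι v))‖^2 ≤ ε/2 := by
      have h1 : ‖S (G udag - G (ι v))‖^2 ≤ ε/6 := by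
        have := pow_le_pow_left₀ (norm_nonneg _) hcvb 2
        rwa [Real.sq_sqrt (by linarith)] at this
      linarith
    have h1 : Tendsto (fun n : ℕ => (2*‖v‖^2 + 8*Kc)/n) atTop (𝓝 0) :=
      tendsto_const_div_atTop_nhds_zero_nat _
    obtain ⟨N, hN⟩ := (Metric.tendsto_atTop.1 h1) (ε/2) (by linarith)
    refine ⟨max N 1, fun n hn => ?_⟩
    have hn1 : 1 ≤ n := le_trans (le_max_right _ _) hn
    have hnN : N ≤ n := le_trans (le_max_left _ _) hn
    have hn0 : (0:ℝ) < n := by exact_mod_cast hn1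
    have hb := hbound v n hn1
    have hNn := hN n hnN
    rw [Real.dist_eq, sub_zero] at hNn
    have hsplit : 2*‖v‖^2/n + 8*Kc/n = (2*‖v‖^2 + 8*Kc)/n := by ring
    have habs : (2*‖v‖^2 + 8*Kc)/n < ε/2 := lt_of_abs_lt hNn
    rw [Real.dist_eq, sub_zero, abs_of_nonneg (hIpos n)]
    calc I n ≤ 2*‖v‖^2/n + 3*‖S (G udag - G (ι v))‖^2 + 8*Kc/n := hb
      _ = (2*‖v‖^2 + 8*Kc)/n + 3*‖S (G udag - G (ι v))‖^2 := by
          rw [← hsplit]; ring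
      _ < ε/2 + ε/2 := by
          apply add_lt_add_of_lt_of_le habs hcv2
      _ = ε := by ring
  refine ⟨htend, ?_⟩
  -- subsequence with summable L¹ norms
  obtain ⟨φ, hφ, hφle⟩ : ∃ φ : ℕ → ℕ, StrictMono φ ∧ ∀ k, I (φ k) ≤ (1/2:ℝ)^k := by
    have h : ∀ k : ℕ, ∀ᶠ m in atTop, I m ≤ (1/2:ℝ)^k := by
      intro k
      have := htend.eventually_lt_const (show (0:ℝ) < (1/2:ℝ)^k by positivity)
      filter_upwards [this] with m hm using le_of_lt hm
    exact Filter.extraction_forall_of_eventually h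
  refine ⟨φ, hφ, ?_⟩
  set f : ℕ → Ω → ℝ := fun n ω => ‖S (G udag - G (ι (u n ω)))‖^2 with hfdef
  set g : ℕ → Ω → ℝ≥0∞ := fun k ω => ENNReal.ofReal (f (φ k) ω) with hgdef
  have hgmeas : ∀ k, AEMeasurable (g k) P := fun k =>
    ((hGint (φ k)).aemeasurable).ennreal_ofReal
  have hglint : ∀ k, ∫⁻ ω, g k ω ∂P = ENNReal.ofReal (I (φ k)) := by
    intro k
    rw [← ofReal_integral_eq_lintegral_ofReal (hGint (φ k))
      (Filter.Eventually.of_forall fun ω => by positivity)]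
  have htsum_fin : ∑' k, ∫⁻ ω, g k ω ∂P ≠ ⊤ := by
    have hle : ∑' k, ∫⁻ ω, g k ω ∂P ≤ ∑' k : ℕ, ENNReal.ofReal ((1/2:ℝ)^k) := by
      refine ENNReal.tsum_le_tsum fun k => ?_
      rw [hglint k]
      exact ENNReal.ofReal_le_ofReal (hφle k)
    have heq : ∑' k : ℕ, ENNReal.ofReal ((1/2:ℝ)^k) = ENNReal.ofReal 2 := by
      rw [← ENNReal.ofReal_tsum_of_nonneg (fun k => by positivity)
        (summable_geometric_two.congr (by intro k; norm_num))]
      congr 1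
      simpa using tsum_geometric_two
    exact ne_top_of_le_ne_top (by rw [heq]; exact ENNReal.ofReal_ne_top) hle
  have hlint_tsum : ∫⁻ ω, ∑' k, g k ω ∂P ≠ ⊤ := by
    rw [lintegral_tsum hgmeas]
    exact htsum_fin
  have hae : ∀ᵐ ω ∂P, ∑' k, g k ω < ⊤ :=
    ae_lt_top' (AEMeasurable.ennreal_tsum hgmeas) hlint_tsum
  filter_upwards [hae] with ω hω
  have hg0 : Tendsto (fun k => g k ω) atTop (𝓝 0) :=
    ENNReal.tendsto_atTop_zero_of_tsum_ne_top hω.ne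
  have hf0 : Tendsto (fun k => f (φ k) ω) atTop (𝓝 0) := by
    have h := (ENNReal.tendsto_toReal (by simp : (0:ℝ≥0∞) ≠ ⊤)).comp hg0
    simp only [Function.comp_def, ENNReal.toReal_zero] at h
    refine h.congr fun k => ?_
    refine ENNReal.toReal_ofReal ?_
    simp only [hfdef]
    positivity
  -- transfer to convergence of G(ι(u (φ k) ω))
  have hsq : Tendsto (fun k => ‖G (ι (u (φ k) ω)) - G udag‖^2) atTop (𝓝 0) := by
    refine squeeze_zero (fun k => by positivity) (fun k => ?_) (by
      simpa using hf0.const_mul (c0^2))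
    have h1 : ‖G (ι (u (φ k) ω)) - G udag‖ = ‖G udag - G (ι (u (φ k) ω))‖ :=
      norm_sub_rev _ _
    have h2 := hc0 (G udag - G (ι (u (φ k) ω)))
    have h3 : ‖G udag - G (ι (u (φ k) ω))‖^2 ≤ (c0 * ‖S (G udag - G (ι (u (φ k) ω)))‖)^2 :=
      pow_le_pow_left₀ (norm_nonneg _) h2 2
    calc ‖G (ι (u (φ k) ω)) - G udag‖^2 = ‖G udag - G (ι (u (φ k) ω))‖^2 := by rw [h1]
      _ ≤ (c0 * ‖S (G udag - G (ι (u (φ k) ω)))‖)^2 := h3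
      _ = c0^2 * f (φ k) ω := by rw [hfdef]; ring
  have hnorm : Tendsto (fun k => ‖G (ι (u (φ k) ω)) - G udag‖) atTop (𝓝 0) := by
    have h := (Real.continuous_sqrt.tendsto 0).comp hsq
    simp only [Function.comp_def, Real.sqrt_zero] at h
    exact h.congr fun k => Real.sqrt_sq (norm_nonneg _)
  exact tendsto_iff_norm_sub_tendsto_zero.2 hnorm
end

section
/- Let μ₀ be a Gaussian measure on ℝⁿ with density proportional to exp(−½ Σⱼ aⱼxⱼ²), a₁ ≤ a₂ ≤ … ≤ aₙ. Suppose z ∈ ℝⁿ and N ≤ n, A > 0 are such that Σ_{j=1}^{N} aⱼxⱼ² > A² for all x in the ball B(z,δ), and δ is small enough that exp(−¼(a₁+…+a_N)δ²) > ½. Then μ₀(B(z,δ))/μ₀(B(0,δ)) ≤ 2 exp(−A²/4). -/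
open MeasureTheory Metric Real
open scoped BigOperators


open Set
open scoped ENNReal

noncomputable def sgauss (b : ℝ) : ℝ → ℝ := fun y => Real.exp (-(1/2) * (b * y^2))

lemma sgauss_cont (b : ℝ) : Continuous (sgauss b) := by
  unfold sgauss; continuity

lemma sgauss_pos (b : ℝ) (y : ℝ) : 0 < sgauss b y := Real.exp_pos _

lemma sgauss_even (b y : ℝ) : sgauss b (-y) = sgauss b y := by simp [sgauss]

lemma sgauss_anti (b : ℝ) (hb : 0 ≤ b) {u v : ℝ} (h : u^2 ≤ v^2) :
    sgauss b v ≤ sgauss b u := by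
  unfold sgauss
  exact Real.exp_le_exp.2 (by nlinarith)

/-- 1-D interval Anderson for a centered Gaussian density. -/
lemma oneD_anderson (b : ℝ) (hb : 0 ≤ b) (r c : ℝ) :
    ∫ y in Ioo (c - r) (c + r), sgauss b y ≤ ∫ y in Ioo (-r) r, sgauss b y := by
  rcases le_or_gt r 0 with hr | hr
  · rw [Ioo_eq_empty (by linarith), Ioo_eq_empty (by linarith)]
  -- express via interval integrals
  have hii : ∀ u v : ℝ, IntervalIntegrable (sgauss b) volume u v :=
    fun u v => (sgauss_cont b).intervalIntegrable u v
  have key : ∀ d : ℝ, 0 ≤ d →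
      ∫ y in (d - r)..(d + r), sgauss b y ≤ ∫ y in (0 - r)..(0 + r), sgauss b y := by
    intro d hd
    set H : ℝ → ℝ := fun t => ∫ y in (0:ℝ)..t, sgauss b y with hH
    have hderiv : ∀ t : ℝ, HasDerivAt H (sgauss b t) t := by
      intro t
      exact intervalIntegral.integral_hasDerivAt_right (hii 0 t)
        ((sgauss_cont b).stronglyMeasurableAtFilter _ _)
        (sgauss_cont b).continuousAt
    have hsplit : ∀ e : ℝ, ∫ y in (e - r)..(e + r), sgauss b y = H (e + r) - H (e - r) := by
      intro e
      rw [hH]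
      exact (intervalIntegral.integral_interval_sub_left (hii 0 (e+r)) (hii 0 (e-r))).symm
    rw [hsplit d, hsplit 0]
    have h1 : ∀ e : ℝ, HasDerivAt (fun e => H (e + r) - H (e - r))
        (sgauss b (e + r) - sgauss b (e - r)) e := by
      intro e
      have c1 : HasDerivAt (fun e : ℝ => H (e + r)) (sgauss b (e + r)) e := by
        have := HasDerivAt.comp e (hderiv (e + r)) ((hasDerivAt_id e).add_const r)
        simpa [Function.comp_def] using this
      have c2 : HasDerivAt (fun e : ℝ => H (e - r)) (sgauss b (e - r)) e := by
        have := HasDerivAt.comp e (hderiv (e - r)) ((hasDerivAt_id e).sub_const r)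
        simpa [Function.comp_def] using this
      exact c1.sub c2
    have hanti : AntitoneOn (fun e => H (e + r) - H (e - r)) (Ici (0:ℝ)) := by
      apply antitoneOn_of_deriv_nonpos (convex_Ici 0)
      · exact Continuous.continuousOn
          (continuous_iff_continuousAt.2 fun e => (h1 e).continuousAt)
      · intro e he
        exact ((h1 e).differentiableAt).differentiableWithinAt
      · intro e he
        rw [(h1 e).deriv]
        have he' : 0 < e := by simpa using he
        have h2 : (e - r)^2 ≤ (e + r)^2 := by nlinarith
        have := sgauss_anti b hb h2
        linarith
    have := hanti (self_mem_Ici) hd hd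
    simpa using this
  -- reduce Ioo to interval integrals
  have hIoo : ∀ e : ℝ, ∫ y in Ioo (e - r) (e + r), sgauss b y = ∫ y in (e - r)..(e + r), sgauss b y := by
    intro e
    rw [intervalIntegral.integral_of_le (by linarith), integral_Ioc_eq_integral_Ioo]
  rw [hIoo c]
  have h0 : ∫ y in Ioo (-r) r, sgauss b y = ∫ y in (0 - r)..(0 + r), sgauss b y := by
    rw [← hIoo 0]; norm_num
  rw [h0]
  rcases le_or_gt 0 c with hc | hc
  · exact key c hc
  · have hrefl : ∫ y in (c - r)..(c + r), sgauss b y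
        = ∫ y in (-c - r)..(-c + r), sgauss b y := by
      have : ∫ y in (c - r)..(c + r), sgauss b y = ∫ y in (c - r)..(c + r), sgauss b (-y) := by
        simp_rw [sgauss_even]
      rw [this, intervalIntegral.integral_comp_neg (a := c - r) (b := c + r) (sgauss b)]
      rw [show -(c+r) = -c - r by ring, show -(c-r) = -c + r by ring]
    rw [hrefl]
    exact key (-c) (by linarith)

lemma set_eq_Ioo_s14 (c R : ℝ) (hR : 0 < R) :
    {y : ℝ | (y - c)^2 < R} = Ioo (c - Real.sqrt R) (c + Real.sqrt R) := by
  ext y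
  have hr : 0 < Real.sqrt R := Real.sqrt_pos.2 hR
  simp only [mem_setOf_eq, mem_Ioo]
  constructor
  · intro h
    have h1 : |y - c| < Real.sqrt R := by
      have := Real.sqrt_lt_sqrt (sq_nonneg _) h
      rwa [Real.sqrt_sq_eq_abs] at this
    rw [abs_lt] at h1
    constructor <;> linarith [h1.1, h1.2]
  · intro ⟨h1, h2⟩
    have h3 : |y - c| < Real.sqrt R := abs_lt.2 ⟨by linarith, by linarith⟩
    have h4 : (y - c)^2 < (Real.sqrt R)^2 := by
      rw [← sq_abs]
      exact pow_lt_pow_left₀ h3 (abs_nonneg _) two_ne_zero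
    rwa [Real.sq_sqrt hR.le] at h4

lemma sgauss_integrableOn_Ioo (b u v : ℝ) : IntegrableOn (sgauss b) (Ioo u v) := by
  exact ((sgauss_cont b).continuousOn.integrableOn_compact isCompact_Icc).mono_set
    Ioo_subset_Icc_self

lemma oneD_anderson' (b : ℝ) (hb : 0 ≤ b) (R c : ℝ) :
    ∫⁻ y in {y : ℝ | (y - c)^2 < R}, ENNReal.ofReal (sgauss b y)
      ≤ ∫⁻ y in {y : ℝ | y^2 < R}, ENNReal.ofReal (sgauss b y) := by
  rcases le_or_gt R 0 with hR | hR
  · have : {y : ℝ | (y - c)^2 < R} = ∅ := by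
      ext y; simp only [mem_setOf_eq, mem_empty_iff_false, iff_false, not_lt]
      exact le_trans hR (sq_nonneg _)
    rw [this]
    simp
  · have h0 : {y : ℝ | y^2 < R} = Ioo (0 - Real.sqrt R) (0 + Real.sqrt R) := by
      have := set_eq_Ioo_s14 0 R hR
      simpa using this
    rw [set_eq_Ioo_s14 c R hR, h0]
    have conv : ∀ u v : ℝ, ∫⁻ y in Ioo u v, ENNReal.ofReal (sgauss b y)
        = ENNReal.ofReal (∫ y in Ioo u v, sgauss b y) := by
      intro u v
      rw [← ofReal_integral_eq_lintegral_ofReal (sgauss_integrableOn_Ioo b u v)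
        (Filter.Eventually.of_forall fun y => (sgauss_pos b y).le)]
    rw [conv, conv]
    apply ENNReal.ofReal_le_ofReal
    have := oneD_anderson b hb (Real.sqrt R) c
    convert this using 3 <;> ring

open scoped ENNReal

noncomputable def Fball (n : ℕ) (δ : ℝ) (b c : Fin n → ℝ) : (Fin n → ℝ) → ℝ≥0∞ :=
  Set.indicator {x | ∑ j, (x j - c j)^2 < δ^2}
    (fun x => ∏ j, ENNReal.ofReal (sgauss (b j) (x j)))

lemma Fball_meas (n : ℕ) (δ : ℝ) (b c : Fin n → ℝ) : Measurable (Fball n δ b c) := by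
  apply Measurable.indicator
  · exact Finset.measurable_prod _ fun j _ =>
      (ENNReal.measurable_ofReal.comp ((sgauss_cont (b j)).measurable.comp (measurable_pi_apply j)))
  · exact measurableSet_lt
      (Finset.measurable_sum _ fun j _ =>
        ((measurable_pi_apply j).sub measurable_const).pow_const 2) measurable_const

set_option maxHeartbeats 1000000 in
lemma Fball_step (n : ℕ) (δ : ℝ) (b c : Fin n → ℝ) (hb : ∀ j, 0 ≤ b j) (k : Fin n) :
    ∫⁻ x, Fball n δ b c x ∂(Measure.pi fun _ => (volume : Measure ℝ))
      ≤ ∫⁻ x, Fball n δ b (Function.update c k 0) x ∂(Measure.pi fun _ => (volume : Measure ℝ)) := by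
  apply lintegral_le_of_lmarginal_le {k} (Fball_meas n δ b c)
    (Fball_meas n δ b (Function.update c k 0))
  rw [lmarginal_singleton, lmarginal_singleton]
  intro x
  dsimp only
  set S : ℝ := ∑ j ∈ Finset.univ.erase k, (x j - c j)^2 with hS
  set P : ℝ≥0∞ := ∏ j ∈ Finset.univ.erase k, ENNReal.ofReal (sgauss (b j) (x j)) with hP
  have hsum : ∀ (d : Fin n → ℝ) (y : ℝ), d k = c k → (∀ j, j ≠ k → d j = c j) →
      (∑ j, (Function.update x k y j - d j)^2) = (y - d k)^2 + S := by
    intro d y _ hd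
    rw [← Finset.add_sum_erase _ _ (Finset.mem_univ k)]
    congr 1
    · rw [Function.update_self]
    · apply Finset.sum_congr rfl
      intro j hj
      have hjk : j ≠ k := Finset.ne_of_mem_erase hj
      rw [Function.update_of_ne hjk, hd j hjk]
  have hprod : ∀ y : ℝ, (∏ j, ENNReal.ofReal (sgauss (b j) (Function.update x k y j)))
      = ENNReal.ofReal (sgauss (b k) y) * P := by
    intro y
    rw [← Finset.mul_prod_erase _ _ (Finset.mem_univ k), Function.update_self]
    congr 1
    apply Finset.prod_congr rfl
    intro j hj
    rw [Function.update_of_ne (Finset.ne_of_mem_erase hj)]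
  have key : ∀ (e : ℝ),
      (∫⁻ y, Set.indicator {w : Fin n → ℝ | ∑ j, (w j - Function.update c k e j)^2 < δ^2}
        (fun w => ∏ j, ENNReal.ofReal (sgauss (b j) (w j))) (Function.update x k y))
      = P * ∫⁻ y in {y : ℝ | (y - e)^2 < δ^2 - S}, ENNReal.ofReal (sgauss (b k) y) := by
    intro e
    have heq : ∀ y : ℝ, Set.indicator {w : Fin n → ℝ | ∑ j, (w j - Function.update c k e j)^2 < δ^2}
        (fun w => ∏ j, ENNReal.ofReal (sgauss (b j) (w j))) (Function.update x k y)
        = P * Set.indicator {y : ℝ | (y - e)^2 < δ^2 - S}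
            (fun y => ENNReal.ofReal (sgauss (b k) y)) y := by
      intro y
      have hd : ∀ j, j ≠ k → Function.update c k e j = c j := fun j hj => Function.update_of_ne hj _ _
      have hsum' : (∑ j, (Function.update x k y j - Function.update c k e j)^2) = (y - e)^2 + S := by
        rw [← Finset.add_sum_erase _ _ (Finset.mem_univ k)]
        congr 1
        · rw [Function.update_self, Function.update_self]
        · apply Finset.sum_congr rfl
          intro j hj
          have hjk : j ≠ k := Finset.ne_of_mem_erase hj
          rw [Function.update_of_ne hjk, Function.update_of_ne hjk]
      rw [Set.indicator_apply, Set.indicator_apply]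
      simp only [Set.mem_setOf_eq, hsum', hprod]
      by_cases h : (y - e)^2 < δ^2 - S
      · rw [if_pos (by linarith), if_pos h, mul_comm]
      · rw [if_neg (by intro hc; exact h (by linarith)), if_neg h, mul_zero]
    simp_rw [heq]
    have hset : MeasurableSet {y : ℝ | (y - e)^2 < δ^2 - S} := by
      apply measurableSet_lt _ measurable_const
      fun_prop
    have hm : Measurable fun y => ENNReal.ofReal (sgauss (b k) y) :=
      ENNReal.measurable_ofReal.comp (sgauss_cont (b k)).measurable
    rw [lintegral_const_mul _ (Measurable.indicator hm hset)]
    congr 1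
    rw [lintegral_indicator hset]
  have h1 := key (c k)
  have h2 := key 0
  simp only [sub_zero] at h2
  have hck : Function.update c k (c k) = c := Function.update_eq_self k c
  rw [hck] at h1
  simp only [Fball]
  rw [h1, h2]
  exact mul_le_mul_right (oneD_anderson' (b k) (hb k) (δ^2 - S) (c k)) P

lemma Fball_anderson (n : ℕ) (δ : ℝ) (b c : Fin n → ℝ) (hb : ∀ j, 0 ≤ b j) :
    ∫⁻ x, Fball n δ b c x ∂(Measure.pi fun _ => (volume : Measure ℝ))
      ≤ ∫⁻ x, Fball n δ b (fun _ => 0) x ∂(Measure.pi fun _ => (volume : Measure ℝ)) := by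
  have aux : ∀ s : Finset (Fin n),
      ∫⁻ x, Fball n δ b c x ∂(Measure.pi fun _ => (volume : Measure ℝ))
      ≤ ∫⁻ x, Fball n δ b (fun j => if j ∈ s then 0 else c j) x
          ∂(Measure.pi fun _ => (volume : Measure ℝ)) := by
    intro s
    induction s using Finset.induction with
    | empty => simp
    | @insert k s hk ih =>
      have hupd : (fun j => if j ∈ insert k s then 0 else c j)
          = Function.update (fun j => if j ∈ s then 0 else c j) k 0 := by
        funext j
        by_cases hj : j = k
        · subst hj; simp
        · rw [Function.update_of_ne hj]
          simp [Finset.mem_insert, hj]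
      rw [hupd]
      exact ih.trans (Fball_step n δ b _ hb k)
  have := aux Finset.univ
  simpa using this

lemma mem_ball_iff_sum (n : ℕ) (δ : ℝ) (hδ : 0 < δ) (z x : EuclideanSpace ℝ (Fin n)) :
    x ∈ Metric.ball z δ ↔ (∑ j, (x j - z j)^2) < δ^2 := by
  rw [Metric.mem_ball, EuclideanSpace.dist_eq]
  rw [Real.sqrt_lt' hδ]
  constructor <;> intro h <;> [skip; skip] <;>
    · convert h using 2 with j
      rw [Real.dist_eq, sq_abs]

lemma bridge (n : ℕ) (δ : ℝ) (hδ : 0 < δ) (d : Fin n → ℝ) (z : EuclideanSpace ℝ (Fin n)) :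
    ∫⁻ x in Metric.ball z δ, ENNReal.ofReal (∏ j, sgauss (d j) (x j)) ∂volume
      = ∫⁻ y, Fball n δ d (fun j => z j) y ∂(Measure.pi fun _ => (volume : Measure ℝ)) := by
  rw [← MeasureTheory.volume_pi]
  rw [← (EuclideanSpace.volume_preserving_symm_measurableEquiv_toLp (Fin n)).lintegral_comp
    (Fball_meas n δ d (fun j => z j))]
  rw [← lintegral_indicator measurableSet_ball]
  congr 1
  funext x
  classical
  rw [Set.indicator_apply]
  have hx : (MeasurableEquiv.toLp 2 (Fin n → ℝ)).symm x = fun j => x j := rfl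
  rw [Fball, Set.indicator_apply, hx]
  have hmem : x ∈ Metric.ball z δ ↔
      (fun j => x j) ∈ {w : Fin n → ℝ | ∑ j, (w j - z j)^2 < δ^2} := by
    rw [mem_ball_iff_sum n δ hδ]
    rfl
  by_cases h : x ∈ Metric.ball z δ
  · rw [if_pos h, if_pos (hmem.1 h)]
    exact ENNReal.ofReal_prod_of_nonneg fun j _ => (sgauss_pos _ _).le
  · rw [if_neg h, if_neg (fun hc => h (hmem.2 hc))]

lemma prod_sgauss {n : ℕ} (d y : Fin n → ℝ) :
    ∏ j, ENNReal.ofReal (sgauss (d j) (y j))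
      = ENNReal.ofReal (Real.exp (∑ j, -(1/2) * (d j * (y j)^2))) := by
  rw [← ENNReal.ofReal_prod_of_nonneg (fun j _ => (sgauss_pos _ _).le)]
  congr 1
  rw [Real.exp_sum]
  simp [sgauss]


/-- Finite-dimensional estimate at the core of Lemma 3.8: for the Gaussian with
density proportional to exp(−½Σⱼaⱼxⱼ²) on ℝⁿ (a₁ ≤ … ≤ aₙ), if
Σ_{j<N} aⱼxⱼ² > A² on the ball B(z,δ) and exp(−¼Σ_{j<N}aⱼδ²) > ½, then
μ₀(B(z,δ))/μ₀(B(0,δ)) ≤ 2 exp(−A²/4). -/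
theorem stmt14 (n N : ℕ) (hN : N ≤ n) (a : Fin n → ℝ) (hpos : ∀ j, 0 < a j)
    (hmono : Monotone a) (A δ : ℝ) (hA : 0 < A) (hδ : 0 < δ)
    (z : EuclideanSpace ℝ (Fin n))
    (hball : ∀ x ∈ ball z δ,
      A^2 < ∑ j ∈ Finset.univ.filter (fun j : Fin n => (j : ℕ) < N),
        a j * (x j)^2)
    (hsmall : (1:ℝ)/2 < exp (-(1/4) *
      (∑ j ∈ Finset.univ.filter (fun j : Fin n => (j : ℕ) < N), a j) * δ^2)) :
    (∫ x in ball z δ, exp (-(1/2) * ∑ j, a j * (x j)^2)) /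
      (∫ x in ball (0 : EuclideanSpace ℝ (Fin n)) δ,
        exp (-(1/2) * ∑ j, a j * (x j)^2))
    ≤ 2 * exp (-A^2 / 4) := by
  classical
  set T : Finset (Fin n) := Finset.univ.filter (fun j : Fin n => (j : ℕ) < N) with hT
  set b : Fin n → ℝ := fun j => if (j : ℕ) < N then a j / 2 else a j with hbdef
  have hb0 : ∀ j, 0 ≤ b j := by
    intro j; by_cases hj : (j:ℕ) < N <;> simp [hbdef, hj] <;> linarith [hpos j]
  have ha0 : ∀ j, 0 ≤ a j := fun j => (hpos j).le
  set μpi := Measure.pi fun _ : Fin n => (volume : Measure ℝ) with hμpi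
  set zc : Fin n → ℝ := fun j => z j with hzc
  set fa : EuclideanSpace ℝ (Fin n) → ℝ :=
    fun x => Real.exp (-(1/2) * ∑ j, a j * (x j)^2) with hfa
  -- rewrite fa as product of sgauss
  have hfa_prod : ∀ x : EuclideanSpace ℝ (Fin n),
      ENNReal.ofReal (fa x) = ENNReal.ofReal (∏ j, sgauss (a j) (x j)) := by
    intro x
    congr 1
    show Real.exp (-(1/2) * ∑ j, a j * (x j)^2) = _
    rw [Finset.mul_sum, Real.exp_sum]
    simp [sgauss]
  -- the exponent splitting identity
  have hsplit : ∀ y : Fin n → ℝ,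
      (∑ j, -(1/2) * (a j * (y j)^2))
        = (∑ j, -(1/2) * (b j * (y j)^2)) + (-(1/4) * ∑ j ∈ T, a j * (y j)^2) := by
    intro y
    rw [Finset.mul_sum, hT, Finset.sum_filter, ← Finset.sum_add_distrib]
    apply Finset.sum_congr rfl
    intro j _
    by_cases hj : (j:ℕ) < N
    · simp only [hbdef, if_pos hj]
      ring
    · simp only [hbdef, if_neg hj]
      ring
  -- transported ball hypothesis
  have hball' : ∀ y : Fin n → ℝ, (∑ j, (y j - zc j)^2) < δ^2 →
      A^2 < ∑ j ∈ T, a j * (y j)^2 := by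
    intro y hy
    have hx : ((MeasurableEquiv.toLp 2 (Fin n → ℝ)) y : EuclideanSpace ℝ (Fin n))
        ∈ Metric.ball z δ := by
      rw [mem_ball_iff_sum n δ hδ]
      exact hy
    exact hball _ hx
  -- pointwise step 1
  have hpt1 : ∀ y : Fin n → ℝ, Fball n δ a zc y
      ≤ ENNReal.ofReal (Real.exp (-A^2/4)) * Fball n δ b zc y := by
    intro y
    rw [Fball, Fball, Set.indicator_apply, Set.indicator_apply]
    by_cases hy : y ∈ {w : Fin n → ℝ | ∑ j, (w j - zc j)^2 < δ^2}
    · rw [if_pos hy, if_pos hy, prod_sgauss, prod_sgauss, ← ENNReal.ofReal_mul (Real.exp_pos _).le]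
      apply ENNReal.ofReal_le_ofReal
      rw [← Real.exp_add]
      apply Real.exp_le_exp.2
      rw [hsplit y]
      have hT2 : A^2 < ∑ j ∈ T, a j * (y j)^2 := hball' y hy
      linarith
    · rw [if_neg hy, if_neg hy, mul_zero]
  -- pointwise step 3
  have hpt3 : ∀ y : Fin n → ℝ, Fball n δ b (fun _ => 0) y
      ≤ 2 * Fball n δ a (fun _ => 0) y := by
    intro y
    rw [Fball, Fball, Set.indicator_apply, Set.indicator_apply]
    by_cases hy : y ∈ {w : Fin n → ℝ | ∑ j, (w j - 0)^2 < δ^2}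
    · rw [if_pos hy, if_pos hy, prod_sgauss, prod_sgauss]
      have h2 : (2 : ℝ≥0∞) = ENNReal.ofReal 2 := by norm_num
      rw [h2, ← ENNReal.ofReal_mul (by norm_num)]
      apply ENNReal.ofReal_le_ofReal
      have hyj : ∀ j, (y j)^2 ≤ δ^2 := by
        intro j
        have hmem : ∑ j, (y j - 0)^2 < δ^2 := hy
        have : (y j - 0)^2 ≤ ∑ j, (y j - 0)^2 :=
          Finset.single_le_sum (f := fun i => (y i - 0)^2) (fun i _ => sq_nonneg _)
            (Finset.mem_univ j)
        simp only [sub_zero] at this hmem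
        linarith
      have hTle : ∑ j ∈ T, a j * (y j)^2 ≤ (∑ j ∈ T, a j) * δ^2 := by
        rw [Finset.sum_mul]
        apply Finset.sum_le_sum
        intro j _
        exact mul_le_mul_of_nonneg_left (hyj j) (ha0 j)
      have hexp2 : Real.exp ((1/4) * ((∑ j ∈ T, a j) * δ^2)) < 2 := by
        have h1 : Real.exp (-(1/4) * (∑ j ∈ T, a j) * δ^2) > 1/2 := hsmall
        have hh : Real.exp (-(1/4) * (∑ j ∈ T, a j) * δ^2)
            * Real.exp ((1/4) * ((∑ j ∈ T, a j) * δ^2)) = 1 := by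
          rw [← Real.exp_add, show (-(1/4) * (∑ j ∈ T, a j) * δ^2)
            + ((1/4) * ((∑ j ∈ T, a j) * δ^2)) = 0 by ring, Real.exp_zero]
        nlinarith [Real.exp_pos ((1/4) * ((∑ j ∈ T, a j) * δ^2)),
          Real.exp_pos (-(1/4) * (∑ j ∈ T, a j) * δ^2)]
      have key : ∀ s : ℝ, s = ∑ j, -(1/2) * (b j * (y j)^2) - ∑ j, -(1/2) * (a j * (y j)^2) →
          Real.exp s ≤ 2 := by
        intro s hs
        have : s = (1/4) * ∑ j ∈ T, a j * (y j)^2 := by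
          rw [hs, hsplit y]; ring
        rw [this]
        apply le_of_lt
        calc Real.exp ((1/4) * ∑ j ∈ T, a j * (y j)^2)
            ≤ Real.exp ((1/4) * ((∑ j ∈ T, a j) * δ^2)) := by
              apply Real.exp_le_exp.2
              nlinarith [hTle]
          _ < 2 := hexp2
      have hkey := key _ rfl
      have hpos' : 0 < Real.exp (∑ j, -(1/2) * (a j * (y j)^2)) := Real.exp_pos _
      have : Real.exp (∑ j, -(1/2) * (b j * (y j)^2))
          = Real.exp (∑ j, -(1/2) * (b j * (y j)^2) - ∑ j, -(1/2) * (a j * (y j)^2))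
            * Real.exp (∑ j, -(1/2) * (a j * (y j)^2)) := by
        rw [← Real.exp_add]; congr 1; ring
      rw [this]
      nlinarith [hkey, hpos']
    · rw [if_neg hy, if_neg hy, mul_zero]
  -- continuity of fa
  have hcont : Continuous fa := by
    rw [hfa]
    apply Real.continuous_exp.comp
    apply Continuous.mul continuous_const
    apply continuous_finset_sum
    intro j _
    exact Continuous.mul continuous_const ((EuclideanSpace.proj j).continuous.pow 2)
  -- integral = toReal of lintegral
  have hint : ∀ w : EuclideanSpace ℝ (Fin n),
      ∫ x in Metric.ball w δ, fa x
        = (∫⁻ x in Metric.ball w δ, ENNReal.ofReal (fa x)).toReal := by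
    intro w
    exact integral_eq_lintegral_of_nonneg_ae
      (Filter.Eventually.of_forall fun x => (Real.exp_pos _).le)
      hcont.aestronglyMeasurable.restrict
  -- identify with pi-side lintegrals
  have hLz : ∫⁻ x in Metric.ball z δ, ENNReal.ofReal (fa x) ∂volume
      = ∫⁻ y, Fball n δ a zc y ∂μpi := by
    simp_rw [hfa_prod]
    exact bridge n δ hδ a z
  have h00 : (fun j => (0 : EuclideanSpace ℝ (Fin n)) j) = (fun _ : Fin n => (0:ℝ)) := rfl
  have hL0 : ∫⁻ x in Metric.ball (0 : EuclideanSpace ℝ (Fin n)) δ, ENNReal.ofReal (fa x) ∂volume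
      = ∫⁻ y, Fball n δ a (fun _ => 0) y ∂μpi := by
    simp_rw [hfa_prod]
    have := bridge n δ hδ a 0
    rwa [h00] at this
  -- the chain of lintegral inequalities
  have c1 : ∫⁻ y, Fball n δ a zc y ∂μpi
      ≤ ENNReal.ofReal (Real.exp (-A^2/4)) * ∫⁻ y, Fball n δ b zc y ∂μpi := by
    calc ∫⁻ y, Fball n δ a zc y ∂μpi
        ≤ ∫⁻ y, ENNReal.ofReal (Real.exp (-A^2/4)) * Fball n δ b zc y ∂μpi :=
          lintegral_mono hpt1
      _ = _ := lintegral_const_mul _ (Fball_meas n δ b zc)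
  have c2 : ∫⁻ y, Fball n δ b zc y ∂μpi ≤ ∫⁻ y, Fball n δ b (fun _ => 0) y ∂μpi :=
    Fball_anderson n δ b zc hb0
  have c3 : ∫⁻ y, Fball n δ b (fun _ => 0) y ∂μpi
      ≤ 2 * ∫⁻ y, Fball n δ a (fun _ => 0) y ∂μpi := by
    calc ∫⁻ y, Fball n δ b (fun _ => 0) y ∂μpi
        ≤ ∫⁻ y, 2 * Fball n δ a (fun _ => 0) y ∂μpi := lintegral_mono hpt3
      _ = _ := lintegral_const_mul _ (Fball_meas n δ a _)
  have chain : ∫⁻ y, Fball n δ a zc y ∂μpi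
      ≤ ENNReal.ofReal (Real.exp (-A^2/4)) * (2 * ∫⁻ y, Fball n δ a (fun _ => 0) y ∂μpi) :=
    c1.trans (mul_le_mul_right (c2.trans c3) _)
  -- finiteness of the denominator lintegral
  have hfin : ∫⁻ y, Fball n δ a (fun _ => 0) y ∂μpi ≠ ⊤ := by
    rw [← hL0]
    have hle : ∫⁻ x in Metric.ball (0 : EuclideanSpace ℝ (Fin n)) δ, ENNReal.ofReal (fa x) ∂volume
        ≤ ∫⁻ _x in Metric.ball (0 : EuclideanSpace ℝ (Fin n)) δ, (1:ℝ≥0∞) ∂volume := by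
      apply lintegral_mono
      intro x
      apply ENNReal.ofReal_le_one.2
      rw [hfa]
      apply Real.exp_le_one_iff.2
      have : (0:ℝ) ≤ ∑ j, a j * (x j)^2 :=
        Finset.sum_nonneg fun j _ => mul_nonneg (ha0 j) (sq_nonneg _)
      nlinarith
    have : ∫⁻ _x in Metric.ball (0 : EuclideanSpace ℝ (Fin n)) δ, (1:ℝ≥0∞) ∂volume
        = volume (Metric.ball (0 : EuclideanSpace ℝ (Fin n)) δ) := by
      rw [lintegral_one, Measure.restrict_apply_univ]
    exact ne_top_of_le_ne_top (by rw [this] at hle ⊢; exact measure_ball_lt_top.ne) hle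
  -- positivity of the denominator lintegral
  have hpos0 : ∫⁻ y, Fball n δ a (fun _ => 0) y ∂μpi ≠ 0 := by
    rw [← hL0]
    have hlow : ∀ x ∈ Metric.ball (0 : EuclideanSpace ℝ (Fin n)) δ,
        ENNReal.ofReal (Real.exp (-(1/2) * ∑ j, a j * δ^2)) ≤ ENNReal.ofReal (fa x) := by
      intro x hx
      apply ENNReal.ofReal_le_ofReal
      rw [hfa]
      apply Real.exp_le_exp.2
      have hx' := (mem_ball_iff_sum n δ hδ 0 x).1 hx
      have hxj : ∀ j, (x j)^2 ≤ δ^2 := by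
        intro j
        have h1 : (x j - (0 : EuclideanSpace ℝ (Fin n)) j)^2
            ≤ ∑ j, (x j - (0 : EuclideanSpace ℝ (Fin n)) j)^2 :=
          Finset.single_le_sum (f := fun i => (x i - (0 : EuclideanSpace ℝ (Fin n)) i)^2)
            (fun i _ => sq_nonneg _) (Finset.mem_univ j)
        have h2 : (x j - (0 : EuclideanSpace ℝ (Fin n)) j) = x j := by simp
        rw [h2] at h1
        linarith
      have : ∑ j, a j * (x j)^2 ≤ ∑ j, a j * δ^2 :=
        Finset.sum_le_sum fun j _ => mul_le_mul_of_nonneg_left (hxj j) (ha0 j)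
      nlinarith
    have hge : ENNReal.ofReal (Real.exp (-(1/2) * ∑ j, a j * δ^2))
          * volume (Metric.ball (0 : EuclideanSpace ℝ (Fin n)) δ)
        ≤ ∫⁻ x in Metric.ball (0 : EuclideanSpace ℝ (Fin n)) δ, ENNReal.ofReal (fa x) ∂volume := by
      rw [← setLIntegral_const]
      exact setLIntegral_mono_ae
        ((ENNReal.measurable_ofReal.comp hcont.measurable).aemeasurable.restrict)
        (Filter.Eventually.of_forall hlow)
    intro hzero
    rw [hzero, le_zero_iff, mul_eq_zero] at hge
    rcases hge with h | h
    · exact absurd h (by simp [Real.exp_pos (-(1/2) * ∑ j, a j * δ^2), ENNReal.ofReal_eq_zero,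
        not_le, Real.exp_pos])
    · exact absurd h (measure_ball_pos _ _ hδ).ne'
  -- put everything together in the reals
  rw [hint z, hint 0, hLz, hL0]
  have hC : ENNReal.ofReal (Real.exp (-A^2/4)) * (2 * ∫⁻ y, Fball n δ a (fun _ => 0) y ∂μpi) ≠ ⊤ := by
    apply ENNReal.mul_ne_top ENNReal.ofReal_ne_top
    exact ENNReal.mul_ne_top (by norm_num) hfin
  have hmono := ENNReal.toReal_mono hC chain
  have hCval : (ENNReal.ofReal (Real.exp (-A^2/4))
      * (2 * ∫⁻ y, Fball n δ a (fun _ => 0) y ∂μpi)).toReal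
      = Real.exp (-A^2/4) * (2 * (∫⁻ y, Fball n δ a (fun _ => 0) y ∂μpi).toReal) := by
    rw [ENNReal.toReal_mul, ENNReal.toReal_mul, ENNReal.toReal_ofReal (Real.exp_pos _).le]
    norm_num
  rw [hCval] at hmono
  have hN0pos : 0 < (∫⁻ y, Fball n δ a (fun _ => 0) y ∂μpi).toReal :=
    ENNReal.toReal_pos hpos0 hfin
  rw [div_le_iff₀ hN0pos]
  calc (∫⁻ y, Fball n δ a zc y ∂μpi).toReal
      ≤ Real.exp (-A^2/4) * (2 * (∫⁻ y, Fball n δ a (fun _ => 0) y ∂μpi).toReal) := hmono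
    _ = 2 * Real.exp (-A^2/4) * (∫⁻ y, Fball n δ a (fun _ => 0) y ∂μpi).toReal := by ring
end

section
/- Let E' = {v ∈ H¹([0,T];ℝ) : v(0) = u⁻} and let Ψ : ℝ → ℝ be continuous and bounded below, F : ℝ → ℝ continuous and bounded above. Then the Onsager–Machlup functional I₁(u) = ∫₀ᵀ Ψ(u(t))dt − σ⁻²F(u(T)) + (1/(2σ²))∫₀ᵀ |u'(t)|² dt attains its infimum over E'. -/
open MeasureTheory Real intervalIntegral Filter Topology Set ENNReal

namespace Stmt19Aux

local notation "⟪" x ", " y "⟫" => @inner ℝ _ _ x y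

/-- Weak sequential compactness of bounded sequences in a separable real Hilbert space. -/
theorem weak_seq_compact {H : Type*} [NormedAddCommGroup H] [InnerProductSpace ℝ H]
    [CompleteSpace H] [SecondCountableTopology H]
    (h : ℕ → H) (C : ℝ) (hC : ∀ n, ‖h n‖ ≤ C) :
    ∃ (g : H) (φ : ℕ → ℕ), StrictMono φ ∧ ‖g‖ ≤ C ∧
      ∀ y : H, Tendsto (fun k => ⟪h (φ k), y⟫) atTop (𝓝 ⟪g, y⟫) := by
  have hC0 : 0 ≤ C := le_trans (norm_nonneg _) (hC 0)
  haveI : Nonempty H := ⟨0⟩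
  set D : ℕ → H := TopologicalSpace.denseSeq H with hD
  have hdense : DenseRange D := TopologicalSpace.denseRange_denseSeq H
  set x : ℕ → ℕ → ℝ := fun n i => ⟪h n, D i⟫ with hx
  have hxmem : ∀ n, x n ∈ Set.pi Set.univ (fun i => Set.Icc (-(C * ‖D i‖)) (C * ‖D i‖)) := by
    intro n i _
    have h1 : |⟪h n, D i⟫| ≤ ‖h n‖ * ‖D i‖ := abs_real_inner_le_norm _ _
    have h2 : ‖h n‖ * ‖D i‖ ≤ C * ‖D i‖ :=
      mul_le_mul_of_nonneg_right (hC n) (norm_nonneg _)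
    have := abs_le.mp (h1.trans h2)
    exact ⟨this.1, this.2⟩
  have hScompact : IsCompact (Set.pi Set.univ fun i => Set.Icc (-(C * ‖D i‖)) (C * ‖D i‖)) :=
    isCompact_univ_pi fun i => isCompact_Icc
  obtain ⟨a, -, φ, hφ, hconv⟩ := hScompact.tendsto_subseq hxmem
  rw [tendsto_pi_nhds] at hconv
  -- every pairing sequence is Cauchy
  have hCauchy : ∀ y : H, CauchySeq fun k => ⟪h (φ k), y⟫ := by
    intro y
    rw [Metric.cauchySeq_iff]
    intro ε hε
    obtain ⟨i, hi⟩ := Metric.denseRange_iff.mp hdense y (ε / (4 * (C + 1)))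
      (by positivity)
    have hc : CauchySeq fun k => x (φ k) i := (hconv i).cauchySeq
    rw [Metric.cauchySeq_iff] at hc
    obtain ⟨N, hN⟩ := hc (ε / 2) (by positivity)
    refine ⟨N, fun m hm n hn => ?_⟩
    have key : ∀ p : ℕ, |⟪h (φ p), y⟫ - x (φ p) i| ≤ ε / 4 := by
      intro p
      have h1 : ⟪h (φ p), y⟫ - x (φ p) i = ⟪h (φ p), y - D i⟫ := by
        simp [hx, inner_sub_right]
      rw [h1]
      have h2 : |⟪h (φ p), y - D i⟫| ≤ ‖h (φ p)‖ * ‖y - D i‖ := abs_real_inner_le_norm _ _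
      have h3 : ‖y - D i‖ ≤ ε / (4 * (C + 1)) := by
        have := hi
        rw [dist_eq_norm] at this
        linarith [this.le]
      have h4 : ‖h (φ p)‖ * ‖y - D i‖ ≤ C * (ε / (4 * (C + 1))) :=
        mul_le_mul (hC _) h3 (norm_nonneg _) hC0
      have h5 : C * (ε / (4 * (C + 1))) ≤ ε / 4 := by
        rw [← mul_div_assoc, div_le_div_iff₀ (by positivity) (by norm_num)]
        nlinarith
      linarith [h2.trans (h4.trans h5)]
    have hmn : |x (φ m) i - x (φ n) i| < ε / 2 := by
      have := hN m hm n hn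
      rwa [Real.dist_eq] at this
    have := key m
    have := key n
    rw [Real.dist_eq]
    set sm := ⟪h (φ m), y⟫
    set sn := ⟪h (φ n), y⟫
    calc |sm - sn| ≤ |sm - x (φ m) i| + |x (φ m) i - x (φ n) i| + |x (φ n) i - sn| := by
          have := abs_sub_le sm (x (φ m) i) sn
          have := abs_sub_le (x (φ m) i) (x (φ n) i) sn
          calc |sm - sn| ≤ |sm - x (φ m) i| + |x (φ m) i - sn| := abs_sub_le _ _ _
            _ ≤ |sm - x (φ m) i| + (|x (φ m) i - x (φ n) i| + |x (φ n) i - sn|) := by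
                linarith [abs_sub_le (x (φ m) i) (x (φ n) i) sn]
            _ = _ := by ring
      _ < ε := by
          have h6 := key m
          have h7 := key n
          rw [abs_sub_comm (x (φ n) i) sn] at *
          linarith [key n, abs_sub_comm sn (x (φ n) i) ▸ key n]
  -- limits exist
  have hlim : ∀ y : H, ∃ l : ℝ, Tendsto (fun k => ⟪h (φ k), y⟫) atTop (𝓝 l) :=
    fun y => cauchySeq_tendsto_of_complete (hCauchy y)
  choose Lf hLf using hlim
  have hbound : ∀ y, ‖Lf y‖ ≤ C * ‖y‖ := by
    intro y
    refine le_of_tendsto (hLf y).norm (Eventually.of_forall fun k => ?_)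
    have h1 : |⟪h (φ k), y⟫| ≤ ‖h (φ k)‖ * ‖y‖ := abs_real_inner_le_norm _ _
    have h2 : ‖h (φ k)‖ * ‖y‖ ≤ C * ‖y‖ := mul_le_mul_of_nonneg_right (hC _) (norm_nonneg _)
    simpa [Real.norm_eq_abs] using h1.trans h2
  have hadd : ∀ y z, Lf (y + z) = Lf y + Lf z := by
    intro y z
    refine tendsto_nhds_unique (hLf (y + z)) ?_
    simpa [inner_add_right] using (hLf y).add (hLf z)
  have hsmul : ∀ (c : ℝ) (y : H), Lf (c • y) = c * Lf y := by
    intro c y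
    refine tendsto_nhds_unique (hLf (c • y)) ?_
    simpa [real_inner_smul_right] using (hLf y).const_mul c
  let Lmap : H →ₗ[ℝ] ℝ :=
    { toFun := Lf, map_add' := hadd, map_smul' := hsmul }
  let L : H →L[ℝ] ℝ := Lmap.mkContinuous C hbound
  refine ⟨(InnerProductSpace.toDual ℝ H).symm L, φ, hφ, ?_, ?_⟩
  · have h1 : ‖(InnerProductSpace.toDual ℝ H).symm L‖ = ‖L‖ :=
      (InnerProductSpace.toDual ℝ H).symm.norm_map L
    rw [h1]
    exact Lmap.mkContinuous_norm_le hC0 hbound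
  · intro y
    have h1 : ⟪(InnerProductSpace.toDual ℝ H).symm L, y⟫ = L y :=
      InnerProductSpace.toDual_symm_apply
    rw [h1]
    exact hLf y


noncomputable def μm (T : ℝ) : Measure ℝ := volume.restrict (Set.Icc 0 T)

instance fact2netop : Fact ((2:ℝ≥0∞) ≠ ∞) := ⟨by norm_num⟩

instance (T : ℝ) : IsFiniteMeasure (μm T) := by
  constructor
  rw [μm, Measure.restrict_apply_univ]
  simp [Real.volume_Icc]

set_option synthInstance.maxHeartbeats 1000000 in
instance lp2sc (T : ℝ) : SecondCountableTopology (Lp ℝ 2 (μm T)) := inferInstance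

noncomputable def ind (T t : ℝ) : Lp ℝ 2 (μm T) :=
  indicatorConstLp 2 measurableSet_Ioc (measure_ne_top _ (Set.Ioc 0 t)) (1:ℝ)

lemma inner_ind {T : ℝ} (hT : 0 ≤ T) {t : ℝ} (ht : t ∈ Set.Icc 0 T) (f : Lp ℝ 2 (μm T)) :
    ⟪ind T t, f⟫ = ∫ s in (0:ℝ)..t, f s := by
  have hres : (μm T).restrict (Set.Ioc 0 t) = volume.restrict (Set.Ioc 0 t) := by
    rw [μm, Measure.restrict_restrict measurableSet_Ioc]
    congr 1
    exact Set.inter_eq_left.mpr (fun s hs => ⟨hs.1.le, hs.2.trans ht.2⟩)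
  rw [ind, L2.inner_indicatorConstLp_one, intervalIntegral.integral_of_le ht.1]
  show ∫ x, f x ∂((μm T).restrict (Set.Ioc 0 t)) = ∫ x, f x ∂(volume.restrict (Set.Ioc 0 t))
  rw [hres]

lemma norm_ind_le {T : ℝ} (hT : 0 ≤ T) {t : ℝ} (ht : t ∈ Set.Icc 0 T) :
    ‖ind T t‖ ≤ Real.sqrt T := by
  rw [ind, norm_indicatorConstLp (by norm_num) (by norm_num)]
  have hμ : (μm T (Set.Ioc 0 t)).toReal ≤ T := by
    rw [μm, Measure.restrict_apply measurableSet_Ioc]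
    have h2 : volume (Set.Ioc 0 t ∩ Set.Icc 0 T) ≤ volume (Set.Icc 0 T) :=
      measure_mono inter_subset_right
    have h3 : (volume (Set.Icc 0 T)).toReal = T := by
      rw [Real.volume_Icc, ENNReal.toReal_ofReal (by linarith)]; ring
    calc (volume (Set.Ioc 0 t ∩ Set.Icc 0 T)).toReal
        ≤ (volume (Set.Icc 0 T)).toReal :=
          ENNReal.toReal_mono (by simp [Real.volume_Icc]) h2
      _ = T := h3
  have h4 : (1:ℝ) / (2:ℝ≥0∞).toReal = (1:ℝ)/2 := by norm_num
  rw [h4, norm_one, one_mul, Real.sqrt_eq_rpow]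
  exact Real.rpow_le_rpow ENNReal.toReal_nonneg hμ (by norm_num)


noncomputable def P {T : ℝ} (uminus : ℝ) (f : Lp ℝ 2 (μm T)) (t : ℝ) : ℝ :=
  uminus + ∫ s in (0:ℝ)..t, f s

lemma integrableOn_f {T : ℝ} (f : Lp ℝ 2 (μm T)) :
    IntegrableOn (⇑f) (Set.Icc 0 T) volume :=
  (Lp.memLp f).integrable (by norm_num)

lemma contP {T : ℝ} (hT : 0 ≤ T) (uminus : ℝ) (f : Lp ℝ 2 (μm T)) :
    ContinuousOn (P uminus f) (Set.Icc 0 T) := by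
  have h1 : ContinuousOn (fun t => ∫ s in (0:ℝ)..t, f s) (Set.Icc 0 T) := by
    have := intervalIntegral.continuousOn_primitive_interval (a := (0:ℝ)) (b := T)
      (μ := volume) (f := ⇑f) (by rw [Set.uIcc_of_le hT]; exact integrableOn_f f)
    rwa [Set.uIcc_of_le hT] at this
  exact continuousOn_const.add h1

lemma abs_P_le {T : ℝ} (hT : 0 ≤ T) (uminus : ℝ) (f : Lp ℝ 2 (μm T)) {t : ℝ}
    (ht : t ∈ Set.Icc 0 T) :
    |P uminus f t| ≤ |uminus| + ‖f‖ * Real.sqrt T := by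
  have h1 : ∫ s in (0:ℝ)..t, f s = ⟪ind T t, f⟫ := (inner_ind hT ht f).symm
  have h2 : |⟪ind T t, f⟫| ≤ ‖ind T t‖ * ‖f‖ := abs_real_inner_le_norm _ _
  have h3 : ‖ind T t‖ * ‖f‖ ≤ Real.sqrt T * ‖f‖ :=
    mul_le_mul_of_nonneg_right (norm_ind_le hT ht) (norm_nonneg _)
  have h4 : |P uminus f t| ≤ |uminus| + |∫ s in (0:ℝ)..t, f s| := abs_add_le _ _
  rw [h1] at h4
  calc |P uminus f t| ≤ |uminus| + |⟪ind T t, f⟫| := h4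
    _ ≤ |uminus| + Real.sqrt T * ‖f‖ := by linarith [h2.trans h3]
    _ = |uminus| + ‖f‖ * Real.sqrt T := by ring

noncomputable def Af {T : ℝ} (σ uminus : ℝ) (Ψ F : ℝ → ℝ) (f : Lp ℝ 2 (μm T)) : ℝ :=
  (∫ t in (0:ℝ)..T, Ψ (P uminus f t)) - (1/σ^2) * F (P uminus f T)

noncomputable def Jf {T : ℝ} (σ uminus : ℝ) (Ψ F : ℝ → ℝ) (f : Lp ℝ 2 (μm T)) : ℝ :=
  Af σ uminus Ψ F f + (1/(2*σ^2)) * ‖f‖^2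

lemma ii_psi {T : ℝ} (hT : 0 ≤ T) (uminus : ℝ) {Ψ : ℝ → ℝ} (hΨc : Continuous Ψ)
    (f : Lp ℝ 2 (μm T)) :
    IntervalIntegrable (fun t => Ψ (P uminus f t)) volume 0 T := by
  apply ContinuousOn.intervalIntegrable
  rw [Set.uIcc_of_le hT]
  exact hΨc.comp_continuousOn (contP hT uminus f)

lemma J_lower {T σ uminus M MF : ℝ} {Ψ F : ℝ → ℝ} (hT : 0 < T) (hσ : 0 < σ)
    (hΨc : Continuous Ψ) (hM : ∀ x, M ≤ Ψ x) (hMF : ∀ x, F x ≤ MF)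
    (f : Lp ℝ 2 (μm T)) :
    M * T - (1/σ^2) * MF + (1/(2*σ^2)) * ‖f‖^2 ≤ Jf σ uminus Ψ F f := by
  have h1 : M * T ≤ ∫ t in (0:ℝ)..T, Ψ (P uminus f t) := by
    have := intervalIntegral.integral_mono_on hT.le (intervalIntegrable_const (c := M))
      (ii_psi hT.le uminus hΨc f) (fun x _ => hM (P uminus f x))
    rwa [intervalIntegral.integral_const, smul_eq_mul, sub_zero, mul_comm] at this
  have h2 : (1/σ^2) * F (P uminus f T) ≤ (1/σ^2) * MF :=
    mul_le_mul_of_nonneg_left (hMF _) (by positivity)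
  rw [Jf, Af]
  have h3 : (0:ℝ) ≤ (1/(2*σ^2)) * ‖f‖^2 := by positivity
  nlinarith [h3]



lemma primitive_congr {T : ℝ} {g : ℝ → ℝ} {f : Lp ℝ 2 (μm T)}
    (hg : g =ᵐ[μm T] ⇑f) {t : ℝ} (ht : t ∈ Set.Icc 0 T) :
    ∫ s in (0:ℝ)..t, g s = ∫ s in (0:ℝ)..t, f s := by
  rw [intervalIntegral.integral_of_le ht.1, intervalIntegral.integral_of_le ht.1]
  apply MeasureTheory.integral_congr_ae
  have hsub : Set.Ioc (0:ℝ) t ⊆ Set.Icc 0 T :=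
    fun s hs => ⟨hs.1.le, hs.2.trans ht.2⟩
  exact ae_restrict_of_ae_restrict_of_subset hsub hg

lemma kinetic_eq {T : ℝ} (hT : 0 ≤ T) {g : ℝ → ℝ} {f : Lp ℝ 2 (μm T)}
    (hg : g =ᵐ[μm T] ⇑f) :
    ∫ t in (0:ℝ)..T, (g t)^2 = ‖f‖^2 := by
  rw [intervalIntegral.integral_of_le hT]
  have h1 : ∫ t in Set.Ioc 0 T, (g t)^2 ∂volume = ∫ t in Set.Icc 0 T, (g t)^2 ∂volume :=
    (integral_Icc_eq_integral_Ioc).symm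
  rw [h1]
  have h2 : ∫ t in Set.Icc 0 T, (g t)^2 ∂volume = ∫ t, (g t)^2 ∂(μm T) := rfl
  rw [h2]
  have h3 : ∫ t, (g t)^2 ∂(μm T) = ∫ t, (f t)^2 ∂(μm T) :=
    MeasureTheory.integral_congr_ae (hg.mono fun x hx => by simp only []; rw [hx])
  rw [h3]
  have h4 : ⟪f, f⟫ = ∫ t, (f t)^2 ∂(μm T) := by
    rw [L2.inner_def]
    apply MeasureTheory.integral_congr_ae
    filter_upwards with t
    simp [RCLike.inner_apply, sq]
  rw [← h4, real_inner_self_eq_norm_sq]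

theorem exists_min (T σ uminus : ℝ) (hT : 0 < T) (hσ : 0 < σ)
    (Ψ F : ℝ → ℝ) (hΨc : Continuous Ψ) (hΨbd : ∃ M, ∀ x, M ≤ Ψ x)
    (hFc : Continuous F) (hFbd : ∃ M, ∀ x, F x ≤ M) :
    ∃ f0 : Lp ℝ 2 (μm T), ∀ f : Lp ℝ 2 (μm T), Jf σ uminus Ψ F f0 ≤ Jf σ uminus Ψ F f := by
  obtain ⟨M, hM⟩ := hΨbd
  obtain ⟨MF, hMF⟩ := hFbd
  set c : ℝ := 1/(2*σ^2) with hc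
  have hcpos : 0 < c := by positivity
  set B : ℝ := M * T - (1/σ^2) * MF with hB
  have hlow : ∀ f : Lp ℝ 2 (μm T), B + c * ‖f‖^2 ≤ Jf σ uminus Ψ F f := by
    intro f
    have := J_lower (uminus := uminus) hT hσ hΨc hM hMF f
    rw [Jf] at this ⊢
    rw [hc, hB]
    linarith
  set S : Set ℝ := Set.range (Jf (T := T) σ uminus Ψ F) with hS
  have hSne : S.Nonempty := ⟨_, ⟨0, rfl⟩⟩
  have hSbdd : BddBelow S := by
    refine ⟨B, ?_⟩
    rintro _ ⟨f, rfl⟩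
    nlinarith [hlow f, sq_nonneg ‖f‖, hcpos]
  set m : ℝ := sInf S with hm
  have hm_le : ∀ f, m ≤ Jf σ uminus Ψ F f := fun f => csInf_le hSbdd ⟨f, rfl⟩
  have hseq : ∀ n : ℕ, ∃ f : Lp ℝ 2 (μm T), Jf σ uminus Ψ F f < m + 1/((n:ℝ)+1) := by
    intro n
    obtain ⟨a, haS, ha⟩ := Real.lt_sInf_add_pos hSne
      (show (0:ℝ) < 1/((n:ℝ)+1) by positivity)
    obtain ⟨f, rfl⟩ := haS
    exact ⟨f, by rw [hm]; exact ha⟩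
  choose h hh using hseq
  have hmB : B ≤ m := by
    apply le_csInf hSne
    rintro _ ⟨f, rfl⟩
    nlinarith [hlow f, sq_nonneg ‖f‖, hcpos]
  set C : ℝ := Real.sqrt ((m + 1 - B)/c) with hCdef
  have hCb : ∀ n, ‖h n‖ ≤ C := by
    intro n
    have h1 : c * ‖h n‖^2 ≤ m + 1 - B := by
      have h2 := hh n
      have h3 := hlow (h n)
      have h4 : 1/((n:ℝ)+1) ≤ 1 := by
        rw [div_le_one (by positivity)]
        linarith [Nat.cast_nonneg (α := ℝ) n]
      linarith
    have h5 : ‖h n‖^2 ≤ (m + 1 - B)/c := by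
      rw [le_div_iff₀ hcpos]; linarith
    calc ‖h n‖ = Real.sqrt (‖h n‖^2) := (Real.sqrt_sq (norm_nonneg _)).symm
      _ ≤ C := Real.sqrt_le_sqrt h5
  obtain ⟨g, φ, hφ, hgC, hweak⟩ := weak_seq_compact h C hCb
  -- pointwise convergence of the primitives
  have hpt : ∀ t ∈ Set.Icc (0:ℝ) T,
      Tendsto (fun k => P uminus (h (φ k)) t) atTop (𝓝 (P uminus g t)) := by
    intro t ht
    have h2 : ∀ f : Lp ℝ 2 (μm T), ⟪f, ind T t⟫ = ∫ s in (0:ℝ)..t, f s := fun f => by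
      rw [real_inner_comm]; exact inner_ind hT.le ht f
    have h1 := hweak (ind T t)
    simp_rw [h2] at h1
    simp only [P]
    exact tendsto_const_nhds.add h1
  set R : ℝ := |uminus| + C * Real.sqrt T with hR
  have hPbd : ∀ k, ∀ t ∈ Set.Icc (0:ℝ) T, |P uminus (h (φ k)) t| ≤ R := by
    intro k t ht
    have h1 := abs_P_le hT.le uminus (h (φ k)) ht
    have h2 : ‖h (φ k)‖ * Real.sqrt T ≤ C * Real.sqrt T :=
      mul_le_mul_of_nonneg_right (hCb _) (Real.sqrt_nonneg _)
    rw [hR]; linarith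
  obtain ⟨R', hR'⟩ : ∃ R', ∀ x ∈ Set.Icc (-R) R, ‖Ψ x‖ ≤ R' :=
    isCompact_Icc.exists_bound_of_continuousOn hΨc.continuousOn
  have hΨconv : Tendsto (fun k => ∫ t in (0:ℝ)..T, Ψ (P uminus (h (φ k)) t)) atTop
      (𝓝 (∫ t in (0:ℝ)..T, Ψ (P uminus g t))) := by
    apply intervalIntegral.tendsto_integral_filter_of_dominated_convergence
      (bound := fun _ => R')
    · filter_upwards with k
      apply ContinuousOn.aestronglyMeasurable _ measurableSet_uIoc
      have hsub : Set.uIoc (0:ℝ) T ⊆ Set.Icc 0 T := by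
        rw [Set.uIoc_of_le hT.le]; exact Set.Ioc_subset_Icc_self
      exact (hΨc.comp_continuousOn (contP hT.le uminus _)).mono hsub
    · filter_upwards with k
      filter_upwards with t
      intro htt
      have ht' : t ∈ Set.Icc (0:ℝ) T := by
        rw [Set.uIoc_of_le hT.le] at htt; exact ⟨htt.1.le, htt.2⟩
      exact hR' _ (Set.mem_Icc.mpr (abs_le.mp (hPbd k t ht')))
    · exact intervalIntegrable_const (c := R')
    · filter_upwards with t
      intro htt
      have ht' : t ∈ Set.Icc (0:ℝ) T := by
        rw [Set.uIoc_of_le hT.le] at htt; exact ⟨htt.1.le, htt.2⟩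
      exact (hΨc.tendsto _).comp (hpt t ht')
  have hFconv : Tendsto (fun k => F (P uminus (h (φ k)) T)) atTop
      (𝓝 (F (P uminus g T))) :=
    (hFc.tendsto _).comp (hpt T ⟨hT.le, le_refl T⟩)
  have hAconv : Tendsto (fun k => Af σ uminus Ψ F (h (φ k))) atTop
      (𝓝 (Af σ uminus Ψ F g)) := by
    simp only [Af]
    exact hΨconv.sub (hFconv.const_mul _)
  have hJconv : Tendsto (fun k => Jf σ uminus Ψ F (h (φ k))) atTop (𝓝 m) := by
    have hub : Tendsto (fun k : ℕ => m + 1/((φ k : ℝ)+1)) atTop (𝓝 (m + 0)) := by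
      apply tendsto_const_nhds.add
      exact tendsto_one_div_add_atTop_nhds_zero_nat.comp hφ.tendsto_atTop
    rw [add_zero] at hub
    apply tendsto_of_tendsto_of_tendsto_of_le_of_le tendsto_const_nhds hub
    · exact fun k => hm_le _
    · exact fun k => (hh (φ k)).le
  set Ainf : ℝ := Af σ uminus Ψ F g with hAinf
  have hK2 : Tendsto (fun k => ‖h (φ k)‖^2) atTop (𝓝 ((m - Ainf)/c)) := by
    have h1 : ∀ k, ‖h (φ k)‖^2
        = (Jf σ uminus Ψ F (h (φ k)) - Af σ uminus Ψ F (h (φ k)))/c := by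
      intro k
      rw [Jf, ← hc]
      field_simp
      ring
    simp_rw [h1]
    exact (hJconv.sub hAconv).div_const c
  have hKpos : 0 ≤ (m - Ainf)/c :=
    ge_of_tendsto hK2 (Eventually.of_forall fun k => sq_nonneg _)
  have hnorm : Tendsto (fun k => ‖h (φ k)‖) atTop (𝓝 (Real.sqrt ((m - Ainf)/c))) := by
    have h1 := (Real.continuous_sqrt.tendsto _).comp hK2
    have h2 : (fun k => Real.sqrt (‖h (φ k)‖^2)) = fun k => ‖h (φ k)‖ :=
      funext fun k => Real.sqrt_sq (norm_nonneg _)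
    rw [Function.comp_def] at h1
    rwa [h2] at h1
  have hg2 : ‖g‖^2 ≤ (m - Ainf)/c := by
    have h1 : Tendsto (fun k => ⟪h (φ k), g⟫) atTop (𝓝 (‖g‖^2)) := by
      have := hweak g
      rwa [real_inner_self_eq_norm_sq] at this
    have h2 : ∀ k, ⟪h (φ k), g⟫ ≤ ‖h (φ k)‖ * ‖g‖ := fun k => real_inner_le_norm _ _
    have h3 : ‖g‖^2 ≤ Real.sqrt ((m - Ainf)/c) * ‖g‖ :=
      le_of_tendsto_of_tendsto' h1 (hnorm.mul_const _) h2
    nlinarith [Real.sq_sqrt hKpos, Real.sqrt_nonneg ((m - Ainf)/c), norm_nonneg g,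
      sq_nonneg (Real.sqrt ((m - Ainf)/c) - ‖g‖)]
  refine ⟨g, fun f => ?_⟩
  have h5 : c * ‖g‖^2 ≤ m - Ainf := by
    have h6 := mul_le_mul_of_nonneg_left hg2 hcpos.le
    rwa [mul_div_cancel₀ _ hcpos.ne'] at h6
  have h7 : Jf σ uminus Ψ F g ≤ m := by
    rw [Jf, ← hc, ← hAinf]
    linarith
  exact h7.trans (hm_le f)

end Stmt19Aux

open Stmt19Aux in
/-- Existence of MAP estimators for the unconditioned diffusion (Section 6.1):
over E' = {v ∈ H¹([0,T];ℝ) : v(0) = u⁻} (paths parametrised by an L² weak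
derivative g, with u(t) = u⁻ + ∫₀ᵗ g), the Onsager–Machlup functional
I₁(u) = ∫₀ᵀ Ψ(u(t))dt − σ⁻²F(u(T)) + (1/(2σ²))∫₀ᵀ|u'(t)|²dt attains its
infimum, provided Ψ is continuous and bounded below and F is continuous and
bounded above. -/
theorem stmt19 (T σ uminus : ℝ) (hT : 0 < T) (hσ : 0 < σ)
    (Ψ F : ℝ → ℝ) (hΨc : Continuous Ψ) (hΨbd : ∃ M, ∀ x, M ≤ Ψ x)
    (hFc : Continuous F) (hFbd : ∃ M, ∀ x, F x ≤ M) :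
    ∃ (u g : ℝ → ℝ),
      (MemLp g 2 (volume.restrict (Set.Icc (0:ℝ) T)) ∧
        ∀ t ∈ Set.Icc (0:ℝ) T, u t = uminus + ∫ s in (0:ℝ)..t, g s) ∧
      ∀ (v h : ℝ → ℝ),
        MemLp h 2 (volume.restrict (Set.Icc (0:ℝ) T)) →
        (∀ t ∈ Set.Icc (0:ℝ) T, v t = uminus + ∫ s in (0:ℝ)..t, h s) →
        (∫ t in (0:ℝ)..T, Ψ (u t)) - (1 / σ^2) * F (u T)
            + (1 / (2 * σ^2)) * ∫ t in (0:ℝ)..T, (g t)^2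
          ≤ (∫ t in (0:ℝ)..T, Ψ (v t)) - (1 / σ^2) * F (v T)
            + (1 / (2 * σ^2)) * ∫ t in (0:ℝ)..T, (h t)^2 := by
  obtain ⟨f0, hmin⟩ := Stmt19Aux.exists_min T σ uminus hT hσ Ψ F hΨc hΨbd hFc hFbd
  refine ⟨fun t => uminus + ∫ s in (0:ℝ)..t, f0 s, ⇑f0, ⟨?_, fun t ht => rfl⟩, ?_⟩
  · exact Lp.memLp f0
  · intro v h hmem hv
    have hmem' : MemLp h 2 (Stmt19Aux.μm T) := hmem
    set fh : Lp ℝ 2 (Stmt19Aux.μm T) := hmem'.toLp h with hfh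
    have hae : h =ᵐ[Stmt19Aux.μm T] ⇑fh := (MemLp.coeFn_toLp hmem').symm
    have hveq : ∀ t ∈ Set.Icc (0:ℝ) T, v t = Stmt19Aux.P uminus fh t := by
      intro t ht
      rw [hv t ht]
      show uminus + ∫ s in (0:ℝ)..t, h s = uminus + ∫ s in (0:ℝ)..t, fh s
      rw [Stmt19Aux.primitive_congr hae ht]
    have e1 : (∫ t in (0:ℝ)..T, Ψ (v t))
        = ∫ t in (0:ℝ)..T, Ψ (Stmt19Aux.P uminus fh t) := by
      apply intervalIntegral.integral_congr
      intro t ht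
      rw [Set.uIcc_of_le hT.le] at ht
      simp only []
      rw [hveq t ht]
    have e2 : v T = Stmt19Aux.P uminus fh T := hveq T ⟨hT.le, le_refl T⟩
    have e3 : (∫ t in (0:ℝ)..T, (h t)^2) = ‖fh‖^2 := Stmt19Aux.kinetic_eq hT.le hae
    have e4 : (∫ t in (0:ℝ)..T, (f0 t : ℝ)^2) = ‖f0‖^2 :=
      Stmt19Aux.kinetic_eq hT.le (Filter.EventuallyEq.rfl)
    have hJ := hmin fh
    rw [Stmt19Aux.Jf, Stmt19Aux.Jf, Stmt19Aux.Af, Stmt19Aux.Af] at hJ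
    rw [e1, e2, e3, e4]
    exact hJ
end
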